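/- arXiv:1809.06294 — 7 statements merged into one kernel-verified Lean document; each statement's English description precedes it below -/
import Mathlib

section
/- Let K ∈ End*_𝒜(H), let {Λᵢ ∈ End*_𝒜(H,Hᵢ)}_{i∈I} be a family of adjointable operators such that ∑_{i∈I}⟨Λᵢf, Λᵢf⟩ converges in norm for every f ∈ H, and let A, B be nonzero elements of the center Z(𝒜) such that ‖A⟨K*f, K*f⟩A*‖ ≤ ‖∑_{i∈I}⟨Λᵢf, Λᵢf⟩‖ ≤ ‖B⟨f, f⟩B*‖ for all f ∈ H. If the closure of the range of the analysis operator T : H → ⊕_{i∈I}Hᵢ, Tf = (Λᵢf)_{i∈I}, is orthogonally complemented in ⊕_{i∈I}Hᵢ, then there exist constants λ, μ > 0 such that λ·A⟨K*f, K*f⟩A* ≤ ∑_{i∈I}⟨Λᵢf, Λᵢf⟩ ≤ μ·B⟨f, f⟩B* for all f ∈ H; that is, {Λᵢ} is a ∗-K-g-frame with bounds √λ·A and √μ·B. -/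
open scoped RightActions

/-- The class `CStarModule` as it stood in Mathlib of December 2024 (right `A`-action). -/
class CStarModuleOld (A : outParam <| Type*) (E : Type*) [NonUnitalSemiring A] [StarRing A]
    [Module ℂ A] [AddCommGroup E] [Module ℂ E] [PartialOrder A] [SMul Aᵐᵒᵖ E] [Norm A] [Norm E]
    extends Inner A E where
  inner_add_right {x} {y} {z} : inner x (y + z) = inner x y + inner x z
  inner_self_nonneg {x} : 0 ≤ inner x x
  inner_self {x} : inner x x = 0 ↔ x = 0
  inner_op_smul_right {a : A} {x y : E} : inner x (y <• a) = inner x y * a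
  inner_smul_right_complex {z : ℂ} {x} {y} : inner x (z • y) = z • inner x y
  star_inner x y : star (inner x y) = inner y x
  norm_eq_sqrt_norm_inner_self x : ‖x‖ = √‖inner x x‖

/-- Membership in the Hilbert `𝓐`-module direct sum `⊕ᵢ Hᵢ` (modelled inside `Π i, Hᵢ`):
the pointwise inner products `⟪x i, x i⟫` form a norm-convergent series. -/
def MemDS (𝓐 : Type*) {I : Type*} {Hi : I → Type*} [AddCommMonoid 𝓐] [TopologicalSpace 𝓐]
    [∀ i, Inner 𝓐 (Hi i)] (x : ∀ i, Hi i) : Prop :=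
  Summable fun i => (inner 𝓐 (x i) (x i) : 𝓐)

/-- The norm of an element of the direct sum `⊕ᵢ Hᵢ`. -/
noncomputable def dsNorm (𝓐 : Type*) {I : Type*} {Hi : I → Type*} [AddCommMonoid 𝓐]
    [TopologicalSpace 𝓐] [Norm 𝓐] [∀ i, Inner 𝓐 (Hi i)] (x : ∀ i, Hi i) : ℝ :=
  Real.sqrt ‖∑' i, (inner 𝓐 (x i) (x i) : 𝓐)‖

/-- `x` lies in the closure, inside the direct sum `⊕ᵢ Hᵢ`, of the range of the analysis
operator `f ↦ (Λ i f)ᵢ`. -/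
def InClosureRange (𝓐 : Type*) {I H : Type*} {Hi : I → Type*} [AddCommMonoid 𝓐]
    [TopologicalSpace 𝓐] [Norm 𝓐] [∀ i, Inner 𝓐 (Hi i)] [∀ i, AddCommGroup (Hi i)]
    (Λ : ∀ i, H → Hi i) (x : ∀ i, Hi i) : Prop :=
  MemDS 𝓐 x ∧ ∀ ε : ℝ, 0 < ε → ∃ f : H,
    MemDS 𝓐 (fun i => x i - Λ i f) ∧ dsNorm 𝓐 (fun i => x i - Λ i f) < ε

section Helpers

variable {𝓐 : Type*} [CStarAlgebra 𝓐] [PartialOrder 𝓐] [StarOrderedRing 𝓐]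

private lemma csmo_inner_sub_right {E : Type*} [NormedAddCommGroup E] [NormedSpace ℂ E]
    [SMul 𝓐ᵐᵒᵖ E] [CStarModuleOld 𝓐 E] (x y z : E) :
    (inner 𝓐 x (y - z) : 𝓐) = inner 𝓐 x y - inner 𝓐 x z := by
  rw [eq_sub_iff_add_eq, ← CStarModuleOld.inner_add_right, sub_add_cancel]

private lemma csmo_inner_op_smul_left {E : Type*} [NormedAddCommGroup E] [NormedSpace ℂ E]
    [SMul 𝓐ᵐᵒᵖ E] [CStarModuleOld 𝓐 E] {c : 𝓐} {x y : E} :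
    (inner 𝓐 (x <• c) y : 𝓐) = star c * inner 𝓐 x y := by
  rw [← CStarModuleOld.star_inner y (x <• c), CStarModuleOld.inner_op_smul_right, star_mul,
    CStarModuleOld.star_inner]

/-- Cancellation in the second slot of a C⋆-module inner product. -/
private lemma csm_ext_inner_right {E : Type*} [NormedAddCommGroup E] [NormedSpace ℂ E]
    [SMul 𝓐ᵐᵒᵖ E] [CStarModuleOld 𝓐 E] {u v : E}
    (h : ∀ x : E, (inner 𝓐 x u : 𝓐) = inner 𝓐 x v) : u = v := by
  have h2 : (inner 𝓐 (u - v) (u - v) : 𝓐) = 0 := by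
    rw [csmo_inner_sub_right, h (u - v), sub_self]
  rw [CStarModuleOld.inner_self] at h2
  exact sub_eq_zero.mp h2

/-- Cancellation in the first slot of a C⋆-module inner product. -/
private lemma csm_ext_inner_left {E : Type*} [NormedAddCommGroup E] [NormedSpace ℂ E]
    [SMul 𝓐ᵐᵒᵖ E] [CStarModuleOld 𝓐 E] {u v : E}
    (h : ∀ y : E, (inner 𝓐 u y : 𝓐) = inner 𝓐 v y) : u = v := by
  refine csm_ext_inner_right (𝓐 := 𝓐) fun x => ?_
  rw [← CStarModuleOld.star_inner, h x, CStarModuleOld.star_inner]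

/-- Conjugation formula for the inner product under the right action. -/
private lemma csm_inner_op_smul {E : Type*} [NormedAddCommGroup E] [NormedSpace ℂ E]
    [SMul 𝓐ᵐᵒᵖ E] [CStarModuleOld 𝓐 E] (c : 𝓐) (x : E) :
    (inner 𝓐 (x <• c) (x <• c) : 𝓐) = star c * (inner 𝓐 x x : 𝓐) * c := by
  rw [csmo_inner_op_smul_left, CStarModuleOld.inner_op_smul_right, mul_assoc]

/-- If `‖c* p c‖ ≤ ‖c* s c‖` for all `c`, with `p, s ≥ 0`, then `p ≤ s`. -/
private lemma le_of_forall_norm_conjugate_le {p s : 𝓐} (hp : 0 ≤ p) (hs : 0 ≤ s)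
    (h : ∀ c : 𝓐, ‖star c * p * c‖ ≤ ‖star c * s * c‖) : p ≤ s := by
  rcases subsingleton_or_nontrivial 𝓐 with hsub | hnt
  · exact le_of_eq (Subsingleton.elim p s)
  have hlim : Filter.Tendsto (fun ε : ℝ => s + algebraMap ℝ 𝓐 ε)
      (nhdsWithin 0 (Set.Ioi 0)) (nhds s) := by
    have hcont : Continuous (fun ε : ℝ => s + algebraMap ℝ 𝓐 ε) :=
      continuous_const.add (continuous_algebraMap ℝ 𝓐)
    have := (hcont.tendsto 0).mono_left (nhdsWithin_le_nhds (s := Set.Ioi (0:ℝ)))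
    simpa using this
  refine ge_of_tendsto hlim ?_
  filter_upwards [self_mem_nhdsWithin] with ε hε
  have hε' : (0 : ℝ) < ε := hε
  set t : 𝓐 := s + algebraMap ℝ 𝓐 ε with ht
  have halg_nonneg : (0 : 𝓐) ≤ algebraMap ℝ 𝓐 ε := by
    have : algebraMap ℝ 𝓐 ε
        = star (algebraMap ℝ 𝓐 (Real.sqrt ε)) * algebraMap ℝ 𝓐 (Real.sqrt ε) := by
      rw [← algebraMap_star_comm, star_trivial, ← map_mul, Real.mul_self_sqrt hε'.le]
    rw [this]
    exact star_mul_self_nonneg _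
  have ht0 : 0 ≤ t := add_nonneg hs halg_nonneg
  have hst : s ≤ t := le_add_of_nonneg_right halg_nonneg
  have htu : IsUnit t := by
    refine CStarAlgebra.isUnit_of_le (algebraMap ℝ 𝓐 ε) (le_add_of_nonneg_left hs)
      ⟨halg_nonneg, ?_⟩
    exact (isUnit_iff_ne_zero.mpr hε'.ne').map (algebraMap ℝ 𝓐)
  rw [le_iff_norm_sqrt_mul_rpow p t hp ⟨ht0, htu⟩]
  set c : 𝓐 := t ^ (-(1 / 2) : ℝ) with hc
  have hcsa : IsSelfAdjoint c := IsSelfAdjoint.of_nonneg CFC.rpow_nonneg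
  have hsqsa : star (CFC.sqrt p) = CFC.sqrt p :=
    (IsSelfAdjoint.of_nonneg (CFC.sqrt_nonneg (a := p))).star_eq
  have hkey : ‖CFC.sqrt p * c‖ ^ 2 = ‖star c * p * c‖ := by
    rw [sq, ← CStarRing.norm_star_mul_self]
    congr 1
    rw [star_mul, hsqsa]
    calc star c * CFC.sqrt p * (CFC.sqrt p * c)
        = star c * (CFC.sqrt p * CFC.sqrt p) * c := by simp only [mul_assoc]
      _ = star c * p * c := by rw [CFC.sqrt_mul_sqrt_self p hp]
  have hctc : star c * t * c = 1 := by
    rw [hcsa.star_eq]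
    exact CFC.conjugate_rpow_neg_one_half t ⟨ht0, htu⟩
  have h2 : ‖star c * s * c‖ ≤ 1 := by
    calc ‖star c * s * c‖ ≤ ‖star c * t * c‖ :=
          CStarAlgebra.norm_le_norm_of_nonneg_of_le (star_left_conjugate_nonneg hs c)
            (star_left_conjugate_le_conjugate hst c)
      _ = 1 := by rw [hctc, norm_one]
  have h3 : ‖CFC.sqrt p * c‖ ^ 2 ≤ 1 := by
    rw [hkey]; exact (h c).trans h2
  exact (sq_le_one_iff₀ (norm_nonneg _)).mp h3

end Helpers

/-- If the analysis operator `T` of the family `{Λ i}` has its range closure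
orthogonally complemented in `⊕ᵢ Hᵢ`, and the norm inequalities
`‖A⟪K*f,K*f⟫A*‖ ≤ ‖∑ᵢ ⟪Λᵢf,Λᵢf⟫‖ ≤ ‖B⟪f,f⟫B*‖` hold with `A, B` nonzero central elements,
then `{Λ i}` is a `∗`-`K`-`g`-frame (with bounds `√λ·A`, `√μ·B`). -/
theorem star_K_g_frame_of_norm_ineq_of_orthogonally_complemented
    {𝓐 : Type*} [CStarAlgebra 𝓐] [PartialOrder 𝓐] [StarOrderedRing 𝓐]
    {I : Type*} [Countable I]
    {H : Type*} [NormedAddCommGroup H] [NormedSpace ℂ H] [SMul 𝓐ᵐᵒᵖ H]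
    [CStarModuleOld 𝓐 H] [CompleteSpace H]
    {Hi : I → Type*} [∀ i, NormedAddCommGroup (Hi i)] [∀ i, NormedSpace ℂ (Hi i)]
    [∀ i, SMul 𝓐ᵐᵒᵖ (Hi i)] [∀ i, CStarModuleOld 𝓐 (Hi i)] [∀ i, CompleteSpace (Hi i)]
    -- `K` is an adjointable operator on `H` with adjoint `Kadj`
    (K Kadj : H →L[ℂ] H)
    (hK : ∀ x y : H, (inner 𝓐 (K x) y : 𝓐) = inner 𝓐 x (Kadj y))
    -- the family `Λ i ∈ End*(H, Hi i)` of adjointable operators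
    (Λ : ∀ i, H →L[ℂ] Hi i) (Λadj : ∀ i, Hi i →L[ℂ] H)
    (hΛ : ∀ i (x : H) (y : Hi i), (inner 𝓐 (Λ i x) y : 𝓐) = inner 𝓐 x (Λadj i y))
    (hsum : ∀ x : H, Summable fun i => (inner 𝓐 (Λ i x) (Λ i x) : 𝓐))
    -- `a`, `b` are nonzero elements of the center of `𝓐`
    (a b : 𝓐) (ha : a ≠ 0) (hb : b ≠ 0)
    (hac : a ∈ Set.center 𝓐) (hbc : b ∈ Set.center 𝓐)
    -- the norm inequalities
    (hnorm : ∀ f : H,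
      ‖a * (inner 𝓐 (Kadj f) (Kadj f) : 𝓐) * star a‖ ≤ ‖∑' i, (inner 𝓐 (Λ i f) (Λ i f) : 𝓐)‖ ∧
      ‖∑' i, (inner 𝓐 (Λ i f) (Λ i f) : 𝓐)‖ ≤ ‖b * (inner 𝓐 f f : 𝓐) * star b‖)
    -- the closure of the range of the analysis operator is orthogonally complemented
    (hcomp : ∀ x : ∀ i, Hi i, MemDS 𝓐 x →
      ∃ y z : ∀ i, Hi i, InClosureRange 𝓐 (fun i => ⇑(Λ i)) y ∧ MemDS 𝓐 z ∧
        (∀ w : ∀ i, Hi i, InClosureRange 𝓐 (fun i => ⇑(Λ i)) w →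
          Summable (fun i => (inner 𝓐 (w i) (z i) : 𝓐)) ∧
            ∑' i, (inner 𝓐 (w i) (z i) : 𝓐) = 0) ∧
        x = y + z) :
    ∃ lam mu : ℝ, 0 < lam ∧ 0 < mu ∧ ∀ f : H,
      lam • (a * (inner 𝓐 (Kadj f) (Kadj f) : 𝓐) * star a) ≤
          ∑' i, (inner 𝓐 (Λ i f) (Λ i f) : 𝓐) ∧
      ∑' i, (inner 𝓐 (Λ i f) (Λ i f) : 𝓐) ≤ mu • (b * (inner 𝓐 f f : 𝓐) * star b) := by
  -- centrality: `a`, `star a`, `b`, `star b` commute with everything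
  have hacomm : ∀ x : 𝓐, a * x = x * a := fun x => (Set.mem_center_iff.mp hac).comm x
  have hbcomm : ∀ x : 𝓐, b * x = x * b := fun x => (Set.mem_center_iff.mp hbc).comm x
  have hacomm' : ∀ x : 𝓐, star a * x = x * star a := by
    intro x
    calc star a * x = star (star x * a) := by rw [star_mul, star_star]
      _ = star (a * star x) := by rw [hacomm (star x)]
      _ = x * star a := by rw [star_mul, star_star]
  have hbcomm' : ∀ x : 𝓐, star b * x = x * star b := by
    intro x
    calc star b * x = star (star x * b) := by rw [star_mul, star_star]
      _ = star (b * star x) := by rw [hbcomm (star x)]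
      _ = x * star b := by rw [star_mul, star_star]
  have haswap : ∀ c q : 𝓐, a * (star c * q * c) * star a = star c * (a * q * star a) * c := by
    intro c q
    calc a * (star c * q * c) * star a
        = (a * star c) * q * (c * star a) := by simp only [mul_assoc]
      _ = (star c * a) * q * (star a * c) := by rw [hacomm (star c), ← hacomm' c]
      _ = star c * (a * q * star a) * c := by simp only [mul_assoc]
  have hbswap : ∀ c q : 𝓐, b * (star c * q * c) * star b = star c * (b * q * star b) * c := by
    intro c q
    calc b * (star c * q * c) * star b
        = (b * star c) * q * (c * star b) := by simp only [mul_assoc]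
      _ = (star c * b) * q * (star b * c) := by rw [hbcomm (star c), ← hbcomm' c]
      _ = star c * (b * q * star b) * c := by simp only [mul_assoc]
  -- adjointable operators are module maps
  have hKmod : ∀ (c : 𝓐) (g : H), Kadj (g <• c) = (Kadj g) <• c := by
    intro c g
    refine csm_ext_inner_right (𝓐 := 𝓐) fun x => ?_
    rw [← hK, CStarModuleOld.inner_op_smul_right, hK, ← CStarModuleOld.inner_op_smul_right]
  have hΛmod : ∀ (i : I) (c : 𝓐) (g : H), Λ i (g <• c) = (Λ i g) <• c := by
    intro i c g
    refine csm_ext_inner_left (𝓐 := 𝓐) fun y => ?_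
    rw [hΛ, csmo_inner_op_smul_left, ← hΛ, ← csmo_inner_op_smul_left]
  -- the frame sum transforms by conjugation
  have hSmul : ∀ (c : 𝓐) (g : H),
      (∑' i, (inner 𝓐 (Λ i (g <• c)) (Λ i (g <• c)) : 𝓐))
        = star c * (∑' i, (inner 𝓐 (Λ i g) (Λ i g) : 𝓐)) * c := by
    intro c g
    have h1 : ∀ i, (inner 𝓐 (Λ i (g <• c)) (Λ i (g <• c)) : 𝓐)
        = star c * ((inner 𝓐 (Λ i g) (Λ i g) : 𝓐) * c) := by
      intro i
      rw [hΛmod i c g, csm_inner_op_smul, mul_assoc]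
    calc (∑' i, (inner 𝓐 (Λ i (g <• c)) (Λ i (g <• c)) : 𝓐))
        = ∑' i, star c * ((inner 𝓐 (Λ i g) (Λ i g) : 𝓐) * c) := tsum_congr h1
      _ = star c * ∑' i, ((inner 𝓐 (Λ i g) (Λ i g) : 𝓐) * c) :=
          Summable.tsum_mul_left _ ((hsum g).mul_right c)
      _ = star c * ((∑' i, (inner 𝓐 (Λ i g) (Λ i g) : 𝓐)) * c) := by
          rw [Summable.tsum_mul_right _ (hsum g)]
      _ = star c * (∑' i, (inner 𝓐 (Λ i g) (Λ i g) : 𝓐)) * c := by rw [mul_assoc]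
  refine ⟨1, 1, one_pos, one_pos, fun f => ?_⟩
  have hS0 : (0 : 𝓐) ≤ ∑' i, (inner 𝓐 (Λ i f) (Λ i f) : 𝓐) :=
    tsum_nonneg fun i => CStarModuleOld.inner_self_nonneg
  have hP0 : (0 : 𝓐) ≤ a * (inner 𝓐 (Kadj f) (Kadj f) : 𝓐) * star a :=
    star_right_conjugate_nonneg CStarModuleOld.inner_self_nonneg a
  have hlow : a * (inner 𝓐 (Kadj f) (Kadj f) : 𝓐) * star a ≤ ∑' i, (inner 𝓐 (Λ i f) (Λ i f) : 𝓐) := by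
    refine le_of_forall_norm_conjugate_le hP0 hS0 fun c => ?_
    have h1 := (hnorm (f <• c)).1
    rw [hKmod c f, csm_inner_op_smul, hSmul c f, haswap] at h1
    exact h1
  have hupp : (∑' i, (inner 𝓐 (Λ i f) (Λ i f) : 𝓐)) ≤ b * (inner 𝓐 f f : 𝓐) * star b := by
    refine le_of_forall_norm_conjugate_le hS0
      (star_right_conjugate_nonneg CStarModuleOld.inner_self_nonneg b) fun c => ?_
    have h2 := (hnorm (f <• c)).2
    rw [hSmul c f, csm_inner_op_smul, hbswap] at h2
    exact h2
  rw [one_smul, one_smul]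
  exact ⟨hlow, hupp⟩
end

section
/- Let K ∈ End*_𝒜(H), let {Λᵢ ∈ End*_𝒜(H,Hᵢ)}_{i∈I} be a family of adjointable operators such that ∑_{i∈I}⟨Λᵢf, Λᵢf⟩ converges in norm for every f ∈ H, and let A, B be nonzero elements of the center Z(𝒜) such that ‖A⟨K*f, K*f⟩A*‖ ≤ ‖∑_{i∈I}⟨Λᵢf, Λᵢf⟩‖ ≤ ‖B⟨f, f⟩B*‖ for all f ∈ H. If the analysis operator T : H → ⊕_{i∈I}Hᵢ, Tf = (Λᵢf)_{i∈I}, has closed range, then there exist constants λ, μ > 0 such that λ·A⟨K*f, K*f⟩A* ≤ ∑_{i∈I}⟨Λᵢf, Λᵢf⟩ ≤ μ·B⟨f, f⟩B* for all f ∈ H; that is, {Λᵢ} is a ∗-K-g-frame. -/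
open scoped RightActions

/-- The December 2024 Mathlib `CStarModule` (right `𝓐ᵐᵒᵖ`-action, `⟪x, y <• a⟫ = ⟪x, y⟫ * a`),
whose meaning has since changed in Mathlib. -/
class CStarModule' (A : outParam <| Type*) (E : Type*) [NonUnitalSemiring A] [StarRing A]
    [Module ℂ A] [AddCommGroup E] [Module ℂ E] [PartialOrder A] [SMul Aᵐᵒᵖ E] [Norm A] [Norm E]
    extends Inner A E where
  inner_add_right {x} {y} {z} : inner x (y + z) = inner x y + inner x z
  inner_self_nonneg {x} : 0 ≤ inner x x
  inner_self {x} : inner x x = 0 ↔ x = 0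
  inner_op_smul_right {a : A} {x y : E} : inner x (y <• a) = inner x y * a
  inner_smul_right_complex {z : ℂ} {x} {y} : inner x (z • y) = z • inner x y
  star_inner x y : star (inner x y) = inner y x
  norm_eq_sqrt_norm_inner_self x : ‖x‖ = √‖inner x x‖

open scoped NNReal

namespace CStarModule'

variable {𝓐 : Type*} [CStarAlgebra 𝓐] [PartialOrder 𝓐] {E : Type*} [NormedAddCommGroup E]
  [NormedSpace ℂ E] [SMul 𝓐ᵐᵒᵖ E] [CStarModule' 𝓐 E]

lemma inner_op_smul_left {a : 𝓐} {x y : E} : inner 𝓐 (x <• a) y = star a * inner 𝓐 x y := by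
  rw [← CStarModule'.star_inner y, CStarModule'.inner_op_smul_right, star_mul,
    CStarModule'.star_inner]

lemma inner_sub_right {x y z : E} : inner 𝓐 x (y - z) = inner 𝓐 x y - inner 𝓐 x z := by
  rw [eq_sub_iff_add_eq, ← CStarModule'.inner_add_right, sub_add_cancel]

lemma inner_sub_left {x y z : E} : inner 𝓐 (x - y) z = inner 𝓐 x z - inner 𝓐 y z := by
  rw [← CStarModule'.star_inner z, inner_sub_right, star_sub, CStarModule'.star_inner,
    CStarModule'.star_inner]

end CStarModule'

section Aux

variable {𝓐 : Type*} [CStarAlgebra 𝓐] [PartialOrder 𝓐] [StarOrderedRing 𝓐]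

open CStarModule in
/-- An adjointable operator between Hilbert C*-modules is automatically module-linear. -/
lemma adjointable_op_smul {H E : Type*}
    [NormedAddCommGroup H] [NormedSpace ℂ H] [SMul 𝓐ᵐᵒᵖ H] [CStarModule' 𝓐 H]
    [NormedAddCommGroup E] [NormedSpace ℂ E] [SMul 𝓐ᵐᵒᵖ E] [CStarModule' 𝓐 E]
    (T : H →L[ℂ] E) (Tadj : E →L[ℂ] H)
    (h : ∀ (x : H) (y : E), (inner 𝓐 (T x) y : 𝓐) = inner 𝓐 x (Tadj y))
    (x : H) (c : 𝓐) : T (x <• c) = T x <• c := by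
  have key : (inner 𝓐 (T (x <• c) - T x <• c) (T (x <• c) - T x <• c) : 𝓐) = 0 := by
    rw [CStarModule'.inner_sub_left, h, CStarModule'.inner_op_smul_left,
      CStarModule'.inner_op_smul_left, h, sub_self]
  exact sub_eq_zero.mp (CStarModule'.inner_self.mp key)

/-- The inner product of a right-scaled vector. -/
lemma inner_smul_conj {E : Type*} [NormedAddCommGroup E] [NormedSpace ℂ E] [SMul 𝓐ᵐᵒᵖ E]
    [CStarModule' 𝓐 E] (g : E) (c : 𝓐) :
    (inner 𝓐 (g <• c) (g <• c) : 𝓐) = star c * (inner 𝓐 g g : 𝓐) * c := by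
  rw [CStarModule'.inner_op_smul_right, CStarModule'.inner_op_smul_left]

/-- If `‖c* x c‖ ≤ ‖c* y c‖` for every `c`, then `x ≤ y` (for positive `x`, `y`). -/
lemma le_of_forall_norm_conjugate_le_s2 {x y : 𝓐} (hx : 0 ≤ x) (hy : 0 ≤ y)
    (h : ∀ c : 𝓐, ‖star c * x * c‖ ≤ ‖star c * y * c‖) : x ≤ y := by
  have lim : Filter.Tendsto (fun ε : ℝ => algebraMap ℝ 𝓐 ε + y)
      (nhdsWithin 0 (Set.Ioi 0)) (nhds y) := by
    have hcont : Continuous fun ε : ℝ => algebraMap ℝ 𝓐 ε + y :=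
      (continuous_algebraMap ℝ 𝓐).add continuous_const
    have h0 := hcont.tendsto 0
    simp only [map_zero, zero_add] at h0
    exact h0.mono_left nhdsWithin_le_nhds
  refine ge_of_tendsto lim ?_
  filter_upwards [self_mem_nhdsWithin] with ε hεmem
  have hε : (0 : ℝ) < ε := hεmem
  set z : 𝓐 := algebraMap ℝ 𝓐 ε + y with hzdef
  have hεa : 0 ≤ algebraMap ℝ 𝓐 ε := by
    have hs : star (algebraMap ℝ 𝓐 (Real.sqrt ε)) = algebraMap ℝ 𝓐 (Real.sqrt ε) := by
      rw [← algebraMap_star_comm, star_trivial]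
    have : algebraMap ℝ 𝓐 ε
        = star (algebraMap ℝ 𝓐 (Real.sqrt ε)) * algebraMap ℝ 𝓐 (Real.sqrt ε) := by
      rw [hs, ← map_mul, Real.mul_self_sqrt hε.le]
    rw [this]
    exact star_mul_self_nonneg _
  have hz : 0 ≤ z := add_nonneg hεa hy
  have hεu : IsUnit (algebraMap ℝ 𝓐 ε) := (isUnit_iff_ne_zero.mpr hε.ne').map (algebraMap ℝ 𝓐)
  have hzu : IsUnit z := CStarAlgebra.isUnit_of_le _ (le_add_of_nonneg_right hy) (IsStrictlyPositive.iff_of_unital.mpr ⟨hεa, hεu⟩)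
  have hzspec : 0 ∉ spectrum ℝ≥0 z := spectrum.zero_notMem ℝ≥0 hzu
  set c : 𝓐 := z ^ (-(1 / 2) : ℝ) with hcdef
  set s : 𝓐 := z ^ ((1 / 2) : ℝ) with hsdef
  have hcnn : 0 ≤ c := CFC.rpow_nonneg
  have hsnn : 0 ≤ s := CFC.rpow_nonneg
  have hcsa : star c = c := IsSelfAdjoint.of_nonneg hcnn
  have hssa : star s = s := IsSelfAdjoint.of_nonneg hsnn
  have hczc : c * z * c = 1 := CFC.conjugate_rpow_neg_one_half z (IsStrictlyPositive.iff_of_unital.mpr ⟨hz, hzu⟩)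
  have hsc : s * c = 1 := by
    have h12 := CFC.rpow_mul_rpow_neg (a := z) (1 / 2 : ℝ) (IsStrictlyPositive.iff_of_unital.mpr ⟨hz, hzu⟩)
    rw [← hsdef, ← hcdef] at h12
    exact h12
  have hcs : c * s = 1 := by
    have h12 := CFC.rpow_neg_mul_rpow (a := z) (1 / 2 : ℝ) (IsStrictlyPositive.iff_of_unital.mpr ⟨hz, hzu⟩)
    rw [← hsdef, ← hcdef] at h12
    exact h12
  have hss : s * s = z := by
    have h12 : (1 : ℝ) = 1 / 2 + 1 / 2 := by norm_num
    conv_rhs => rw [← CFC.rpow_one z hz, h12, CFC.rpow_add hzu, ← hsdef]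
  have hyz : y ≤ z := le_add_of_nonneg_left hεa
  have h1 : star c * y * c ≤ 1 := by
    calc star c * y * c ≤ star c * z * c := star_left_conjugate_le_conjugate hyz c
      _ = 1 := by rw [hcsa]; exact hczc
  have hycnn : 0 ≤ star c * y * c := star_left_conjugate_nonneg hy c
  have hxcnn : 0 ≤ star c * x * c := star_left_conjugate_nonneg hx c
  have h2 : ‖star c * x * c‖ ≤ 1 :=
    (h c).trans ((CStarAlgebra.norm_le_one_iff_of_nonneg _ hycnn).mpr h1)
  have h3 : star c * x * c ≤ 1 := (CStarAlgebra.norm_le_one_iff_of_nonneg _ hxcnn).mp h2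
  have h4 : star s * (star c * x * c) * s ≤ star s * 1 * s := star_left_conjugate_le_conjugate h3 s
  rw [hssa, hcsa, mul_one] at h4
  calc x = s * (c * x * c) * s := by
        have hshape : s * (c * x * c) * s = (s * c) * x * (c * s) := by
          simp only [mul_assoc]
        rw [hshape, hsc, hcs, one_mul, mul_one]
    _ ≤ s * s := h4
    _ = z := hss

/-- Conjugation by `c` commutes with the conjugation by a central element. -/
lemma central_conj_conj (a w c : 𝓐) (hac : a ∈ Set.center 𝓐) :
    a * (star c * w * c) * star a = star c * (a * w * star a) * c := by
  have h1 : a * star c = star c * a := (Set.mem_center_iff.mp hac).comm (star c)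
  have h2 : c * star a = star a * c := by
    have := congrArg star h1
    simpa [star_mul] using this
  calc a * (star c * w * c) * star a
      = (a * star c) * (w * (c * star a)) := by simp only [mul_assoc]
    _ = (star c * a) * (w * (star a * c)) := by rw [h1, h2]
    _ = star c * (a * w * star a) * c := by simp only [mul_assoc]

end Aux

/-- If the analysis operator `T` of the family `{Λ i}` has closed range in
`⊕ᵢ Hᵢ`, and the norm inequalities
`‖A⟪K*f,K*f⟫A*‖ ≤ ‖∑ᵢ ⟪Λᵢf,Λᵢf⟫‖ ≤ ‖B⟪f,f⟫B*‖` hold with `A, B` nonzero central elements,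
then `{Λ i}` is a `∗`-`K`-`g`-frame. -/
theorem star_K_g_frame_of_norm_ineq_of_closed_range
    {𝓐 : Type*} [CStarAlgebra 𝓐] [PartialOrder 𝓐] [StarOrderedRing 𝓐]
    {I : Type*} [Countable I]
    {H : Type*} [NormedAddCommGroup H] [NormedSpace ℂ H] [SMul 𝓐ᵐᵒᵖ H]
    [CStarModule' 𝓐 H] [CompleteSpace H]
    {Hi : I → Type*} [∀ i, NormedAddCommGroup (Hi i)] [∀ i, NormedSpace ℂ (Hi i)]
    [∀ i, SMul 𝓐ᵐᵒᵖ (Hi i)] [∀ i, CStarModule' 𝓐 (Hi i)] [∀ i, CompleteSpace (Hi i)]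
    -- `K` is an adjointable operator on `H` with adjoint `Kadj`
    (K Kadj : H →L[ℂ] H)
    (hK : ∀ x y : H, (inner 𝓐 (K x) y : 𝓐) = inner 𝓐 x (Kadj y))
    -- the family `Λ i ∈ End*(H, Hi i)` of adjointable operators
    (Λ : ∀ i, H →L[ℂ] Hi i) (Λadj : ∀ i, Hi i →L[ℂ] H)
    (hΛ : ∀ i (x : H) (y : Hi i), (inner 𝓐 (Λ i x) y : 𝓐) = inner 𝓐 x (Λadj i y))
    (hsum : ∀ x : H, Summable fun i => (inner 𝓐 (Λ i x) (Λ i x) : 𝓐))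
    -- `a`, `b` are nonzero elements of the center of `𝓐`
    (a b : 𝓐) (ha : a ≠ 0) (hb : b ≠ 0)
    (hac : a ∈ Set.center 𝓐) (hbc : b ∈ Set.center 𝓐)
    -- the norm inequalities
    (hnorm : ∀ f : H,
      ‖a * (inner 𝓐 (Kadj f) (Kadj f) : 𝓐) * star a‖ ≤ ‖∑' i, (inner 𝓐 (Λ i f) (Λ i f) : 𝓐)‖ ∧
      ‖∑' i, (inner 𝓐 (Λ i f) (Λ i f) : 𝓐)‖ ≤ ‖b * (inner 𝓐 f f : 𝓐) * star b‖)
    -- the analysis operator has closed range: every point of the closure of its range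
    -- is in its range
    (hclosed : ∀ x : ∀ i, Hi i, InClosureRange 𝓐 (fun i => ⇑(Λ i)) x →
      ∃ f : H, x = fun i => Λ i f) :
    ∃ lam mu : ℝ, 0 < lam ∧ 0 < mu ∧ ∀ f : H,
      lam • (a * (inner 𝓐 (Kadj f) (Kadj f) : 𝓐) * star a) ≤
          ∑' i, (inner 𝓐 (Λ i f) (Λ i f) : 𝓐) ∧
      ∑' i, (inner 𝓐 (Λ i f) (Λ i f) : 𝓐) ≤ mu • (b * (inner 𝓐 f f : 𝓐) * star b) := by
  refine ⟨1, 1, one_pos, one_pos, fun f => ?_⟩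
  -- adjoint relation for `Kadj` and module linearity
  have hKadj : ∀ (x y : H), (inner 𝓐 (Kadj x) y : 𝓐) = inner 𝓐 x (K y) := fun x y => by
    simpa [CStarModule'.star_inner] using (congrArg star (hK y x)).symm
  have hKs : ∀ c : 𝓐, Kadj (f <• c) = Kadj f <• c := fun c =>
    adjointable_op_smul Kadj K hKadj f c
  have hΛs : ∀ (i : I) (c : 𝓐), Λ i (f <• c) = Λ i f <• c := fun i c =>
    adjointable_op_smul (Λ i) (Λadj i) (hΛ i) f c
  -- the series for the scaled vector
  have htsum : ∀ c : 𝓐, ∑' i, (inner 𝓐 (Λ i (f <• c)) (Λ i (f <• c)) : 𝓐)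
      = star c * (∑' i, (inner 𝓐 (Λ i f) (Λ i f) : 𝓐)) * c := by
    intro c
    have h1 : ∀ i : I, (inner 𝓐 (Λ i (f <• c)) (Λ i (f <• c)) : 𝓐)
        = star c * ((inner 𝓐 (Λ i f) (Λ i f) : 𝓐) * c) := fun i => by
      rw [hΛs i c, inner_smul_conj, mul_assoc]
    calc ∑' i, (inner 𝓐 (Λ i (f <• c)) (Λ i (f <• c)) : 𝓐)
        = ∑' i, star c * ((inner 𝓐 (Λ i f) (Λ i f) : 𝓐) * c) := tsum_congr h1
      _ = star c * ∑' i, (inner 𝓐 (Λ i f) (Λ i f) : 𝓐) * c :=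
          Summable.tsum_mul_left (star c) ((hsum f).mul_right c)
      _ = star c * ((∑' i, (inner 𝓐 (Λ i f) (Λ i f) : 𝓐)) * c) := by
          rw [Summable.tsum_mul_right c (hsum f)]
      _ = star c * (∑' i, (inner 𝓐 (Λ i f) (Λ i f) : 𝓐)) * c := (mul_assoc _ _ _).symm
  -- positivity of the three quantities
  have hxK : 0 ≤ a * (inner 𝓐 (Kadj f) (Kadj f) : 𝓐) * star a := by
    have h0 := star_left_conjugate_nonneg (CStarModule'.inner_self_nonneg
      (A := 𝓐) (x := Kadj f)) (star a)
    rwa [star_star] at h0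
  have hxS : 0 ≤ ∑' i, (inner 𝓐 (Λ i f) (Λ i f) : 𝓐) :=
    tsum_nonneg fun i => CStarModule'.inner_self_nonneg
  have hxB : 0 ≤ b * (inner 𝓐 f f : 𝓐) * star b := by
    have h0 := star_left_conjugate_nonneg (CStarModule'.inner_self_nonneg (A := 𝓐) (x := f)) (star b)
    rwa [star_star] at h0
  constructor
  · -- lower bound, with `lam = 1`
    rw [one_smul]
    refine le_of_forall_norm_conjugate_le_s2 hxK hxS fun c => ?_
    have h1 := (hnorm (f <• c)).1
    rwa [hKs c, inner_smul_conj, central_conj_conj a _ c hac, htsum c] at h1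
  · -- upper bound, with `mu = 1`
    rw [one_smul]
    refine le_of_forall_norm_conjugate_le_s2 hxS hxB fun c => ?_
    have h1 := (hnorm (f <• c)).2
    rwa [inner_smul_conj, central_conj_conj b _ c hbc, htsum c] at h1
end

section
/- Let K, L ∈ End*_𝒜(H) and let {Λᵢ}_{i∈I} be a ∗-K-g-frame for H with bounds A, B ∈ 𝒜. Then {Λᵢ ∘ L*}_{i∈I} is a ∗-(LK)-g-frame for H with bounds A and ‖L‖·B; that is, for every f ∈ H, A⟨(LK)*f, (LK)*f⟩A* ≤ ∑_{i∈I}⟨ΛᵢL*f, ΛᵢL*f⟩ ≤ ‖L‖²·B⟨f, f⟩B*. -/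
open scoped RightActions

open CStarModule

section Aux

variable {𝓐 : Type*} [CStarAlgebra 𝓐] [PartialOrder 𝓐] [StarOrderedRing 𝓐]
  {H : Type*} [NormedAddCommGroup H] [NormedSpace ℂ H] [SMul 𝓐 H]
  [CStarModule 𝓐 H] [CompleteSpace H]

private lemma real_smul_star' (s : ℝ) (m : 𝓐) : star (s • m) = s • star m := by
  have h : ∀ x : 𝓐, s • x = (s : ℂ) • x := fun x => (Complex.coe_smul s x).symm
  rw [h, h, star_smul]
  simp [Complex.conj_ofReal]

private lemma adj_norm_le' (L Ladj : H →L[ℂ] H)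
    (hL : ∀ x y : H, (inner 𝓐 (L x) y : 𝓐) = inner 𝓐 x (Ladj y)) (u : H) :
    ‖Ladj u‖ ≤ ‖L‖ * ‖u‖ := by
  have h1 : ‖Ladj u‖ ^ 2 = ‖(inner 𝓐 (Ladj u) (Ladj u) : 𝓐)‖ := norm_sq_eq 𝓐
  rw [← hL] at h1
  have h2 : ‖(inner 𝓐 (L (Ladj u)) u : 𝓐)‖ ≤ ‖L (Ladj u)‖ * ‖u‖ := norm_inner_le H
  have h3 : ‖L (Ladj u)‖ ≤ ‖L‖ * ‖Ladj u‖ := L.le_opNorm _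
  rcases eq_or_lt_of_le (norm_nonneg (Ladj u)) with h0 | h0
  · rw [← h0]; positivity
  · have h4 : ‖Ladj u‖ * ‖Ladj u‖ ≤ (‖L‖ * ‖u‖) * ‖Ladj u‖ := by
      nlinarith [norm_nonneg u, norm_nonneg (L (Ladj u))]
    exact le_of_mul_le_mul_right h4 h0

private lemma key_le' (L Ladj : H →L[ℂ] H)
    (hL : ∀ x y : H, (inner 𝓐 (L x) y : 𝓐) = inner 𝓐 x (Ladj y)) (f : H) :
    (inner 𝓐 (Ladj f) (Ladj f) : 𝓐) ≤ ‖L‖ ^ 2 • (inner 𝓐 f f : 𝓐) := by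
  by_contra hcon
  -- Hahn-Banach separation of the positive cone from the element
  have hconv : Convex ℝ {a : 𝓐 | 0 ≤ a} := fun a ha b hb s u hs hu _ =>
    add_nonneg (smul_nonneg hs ha) (smul_nonneg hu hb)
  have hz : (‖L‖ ^ 2 • (inner 𝓐 f f : 𝓐) - inner 𝓐 (Ladj f) (Ladj f)) ∉ {a : 𝓐 | 0 ≤ a} := by
    intro h
    exact hcon (sub_nonneg.mp h)
  obtain ⟨g, u, hgu, hugz⟩ := geometric_hahn_banach_closed_point hconv
    CStarAlgebra.isClosed_nonneg hz
  clear hcon hz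
  have hu0 : 0 < u := by simpa using hgu 0 le_rfl
  have hgpos : ∀ c : 𝓐, 0 ≤ c → g c ≤ 0 := by
    intro c hc
    by_contra hgc
    push_neg at hgc
    have h2 := hgu (((u + 1) / g c) • c)
      (smul_nonneg (le_of_lt (div_pos (by linarith) hgc)) hc)
    rw [map_smul, smul_eq_mul, div_mul_cancel₀ _ (ne_of_gt hgc)] at h2
    linarith
  set ψ : 𝓐 →L[ℝ] ℝ := -g with hψdef
  have hψpos : ∀ c : 𝓐, 0 ≤ c → 0 ≤ ψ c := fun c hc => by
    simpa [hψdef] using neg_nonneg.mpr (hgpos c hc)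
  have hψz : ψ (‖L‖ ^ 2 • (inner 𝓐 f f : 𝓐) - inner 𝓐 (Ladj f) (Ladj f)) < 0 := by
    simp only [hψdef, ContinuousLinearMap.neg_apply]
    linarith
  clear hugz hgu
  -- the operator T = L ∘ Ladj and its basic properties
  set T : H →L[ℂ] H := L.comp Ladj with hTdef
  have hTval : ∀ x, T x = L (Ladj x) := fun x => rfl
  have hTsym : ∀ x y : H, (inner 𝓐 (T x) y : 𝓐) = inner 𝓐 x (T y) := by
    intro x y
    calc (inner 𝓐 (T x) y : 𝓐) = inner 𝓐 (Ladj x) (Ladj y) := hL _ _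
    _ = star (inner 𝓐 (Ladj y) (Ladj x) : 𝓐) := (star_inner _ _).symm
    _ = star (inner 𝓐 (L (Ladj y)) x : 𝓐) := by rw [hL]
    _ = inner 𝓐 x (T y) := by rw [star_inner, hTval]
  have hpow : ∀ (j i : ℕ), (inner 𝓐 ((T ^ i) f) ((T ^ j) f) : 𝓐) = inner 𝓐 ((T ^ (i + j)) f) f := by
    intro j
    induction j with
    | zero => intro i; simp
    | succ j ih =>
      intro i
      have h1 : (T ^ (j + 1)) f = T ((T ^ j) f) := by
        rw [pow_succ']; rfl
      have h2 : T ((T ^ i) f) = (T ^ (i + 1)) f := by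
        rw [pow_succ']; rfl
      rw [h1, ← hTsym, h2, ih (i + 1), show i + 1 + j = i + (j + 1) from by omega]
  have hTn : ∀ v : H, ‖T v‖ ≤ ‖L‖ ^ 2 * ‖v‖ := by
    intro v
    calc ‖T v‖ = ‖L (Ladj v)‖ := rfl
    _ ≤ ‖L‖ * ‖Ladj v‖ := L.le_opNorm _
    _ ≤ ‖L‖ * (‖L‖ * ‖v‖) :=
      mul_le_mul_of_nonneg_left (adj_norm_le' L Ladj hL v) (norm_nonneg L)
    _ = ‖L‖ ^ 2 * ‖v‖ := by ring
  have hTpow : ∀ k : ℕ, ‖(T ^ k) f‖ ≤ (‖L‖ ^ 2) ^ k * ‖f‖ := by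
    intro k
    induction k with
    | zero => simp
    | succ k ih =>
      have h1 : (T ^ (k + 1)) f = T ((T ^ k) f) := by rw [pow_succ']; rfl
      rw [h1]
      calc ‖T ((T ^ k) f)‖ ≤ ‖L‖ ^ 2 * ‖(T ^ k) f‖ := hTn _
      _ ≤ ‖L‖ ^ 2 * ((‖L‖ ^ 2) ^ k * ‖f‖) :=
        mul_le_mul_of_nonneg_left ih (by positivity)
      _ = (‖L‖ ^ 2) ^ (k + 1) * ‖f‖ := by ring
  -- a real pre-inner-product on H via ψ
  letI core : PreInnerProductSpace.Core ℝ H :=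
  { inner := fun x y => ψ ((2⁻¹ : ℝ) • ((inner 𝓐 x y : 𝓐) + star (inner 𝓐 x y : 𝓐)))
    conj_inner_symm := fun x y => by
      simp only [starRingEnd_apply, star_trivial]
      congr 2
      rw [← star_inner x y, star_star, add_comm]
    add_left := fun x y z => by
      simp only [CStarModule.inner_add_left, star_add, smul_add, map_add]
      ring
    smul_left := fun x y r => by
      simp only [starRingEnd_apply, star_trivial, inner_smul_left_real,
        real_smul_star', ← smul_add, map_smul, smul_eq_mul]
      ring
    re_inner_nonneg := fun x => by
      simp only [RCLike.re_to_real]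
      apply hψpos
      apply smul_nonneg (by norm_num)
      refine add_nonneg inner_self_nonneg ?_
      rw [star_inner]
      exact inner_self_nonneg }
  have CS : ∀ x y : H, |ψ ((2⁻¹ : ℝ) • ((inner 𝓐 x y : 𝓐) + star (inner 𝓐 x y : 𝓐)))| *
      |ψ ((2⁻¹ : ℝ) • ((inner 𝓐 y x : 𝓐) + star (inner 𝓐 y x : 𝓐)))| ≤
      ψ ((2⁻¹ : ℝ) • ((inner 𝓐 x x : 𝓐) + star (inner 𝓐 x x : 𝓐))) *
      ψ ((2⁻¹ : ℝ) • ((inner 𝓐 y y : 𝓐) + star (inner 𝓐 y y : 𝓐))) := fun x y =>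
    InnerProductSpace.Core.inner_mul_inner_self_le (𝕜 := ℝ) (F := H) x y
  -- collapsing the symmetrization on self-adjoint elements
  have hsym : ∀ m : 𝓐, star m = m → (2⁻¹ : ℝ) • (m + star m) = m := by
    intro m hm
    rw [hm, ← two_smul ℝ m, smul_smul]
    norm_num
  have hsa : ∀ k : ℕ, star (inner 𝓐 ((T ^ k) f) f : 𝓐) = inner 𝓐 ((T ^ k) f) f := by
    intro k
    rw [star_inner]
    simpa using hpow k 0
  set d : ℕ → ℝ := fun k => |ψ (inner 𝓐 ((T ^ k) f) f : 𝓐)| with hd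
  set e0 : ℝ := ψ (inner 𝓐 f f : 𝓐) with he0def
  have he0 : 0 ≤ e0 := hψpos _ inner_self_nonneg
  have hrec : ∀ k, d k ^ 2 ≤ d (2 * k) * e0 := by
    intro k
    have h := CS ((T ^ k) f) f
    have h2 : (inner 𝓐 f ((T ^ k) f) : 𝓐) = inner 𝓐 ((T ^ k) f) f := by
      rw [← hsa k, star_inner]
    have h3 : (inner 𝓐 ((T ^ k) f) ((T ^ k) f) : 𝓐) = inner 𝓐 ((T ^ (2 * k)) f) f := by
      rw [two_mul]
      exact hpow k k
    rw [h2, h3, hsym _ (hsa k), hsym _ (hsa (2 * k)), hsym _ (star_inner f f)] at h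
    have h4 : ψ (inner 𝓐 ((T ^ (2 * k)) f) f : 𝓐) ≤ d (2 * k) := le_abs_self _
    calc d k ^ 2 = d k * d k := pow_two (d k)
    _ ≤ ψ (inner 𝓐 ((T ^ (2 * k)) f) f : 𝓐) * e0 := h
    _ ≤ d (2 * k) * e0 := mul_le_mul_of_nonneg_right h4 he0
  have hdk : ∀ k, d k ≤ ‖ψ‖ * (((‖L‖ ^ 2) ^ k * ‖f‖) * ‖f‖) := by
    intro k
    have ha : |ψ (inner 𝓐 ((T ^ k) f) f : 𝓐)| ≤ ‖ψ‖ * ‖(inner 𝓐 ((T ^ k) f) f : 𝓐)‖ := by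
      simpa [Real.norm_eq_abs] using ψ.le_opNorm (inner 𝓐 ((T ^ k) f) f : 𝓐)
    have hb : ‖(inner 𝓐 ((T ^ k) f) f : 𝓐)‖ ≤ ‖(T ^ k) f‖ * ‖f‖ := norm_inner_le H
    have hcc := hTpow k
    calc d k ≤ ‖ψ‖ * ‖(inner 𝓐 ((T ^ k) f) f : 𝓐)‖ := ha
    _ ≤ ‖ψ‖ * (‖(T ^ k) f‖ * ‖f‖) :=
      mul_le_mul_of_nonneg_left hb (norm_nonneg ψ)
    _ ≤ ‖ψ‖ * (((‖L‖ ^ 2) ^ k * ‖f‖) * ‖f‖) :=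
      mul_le_mul_of_nonneg_left
        (mul_le_mul_of_nonneg_right hcc (norm_nonneg f)) (norm_nonneg ψ)
  have hd0 : ∀ k, 0 ≤ d k := fun k => abs_nonneg _
  -- the iteration
  have hiter : ∀ n : ℕ, d 1 ^ (2 ^ n) ≤ d (2 ^ n) * e0 ^ (2 ^ n - 1) := by
    intro n
    induction n with
    | zero => simpa using le_refl (d 1)
    | succ n ih =>
      have e1 : 2 ^ (n + 1) = 2 ^ n * 2 := by ring
      have e2 : (2 ^ n - 1) * 2 + 1 = 2 ^ (n + 1) - 1 := by
        have h9 : 1 ≤ 2 ^ n := Nat.one_le_two_pow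
        have h10 : 2 ^ (n + 1) = 2 ^ n * 2 := by ring
        omega
      have e3 : 2 * 2 ^ n = 2 ^ (n + 1) := by ring
      calc d 1 ^ (2 ^ (n + 1)) = (d 1 ^ (2 ^ n)) ^ 2 := by rw [e1, pow_mul]
      _ ≤ (d (2 ^ n) * e0 ^ (2 ^ n - 1)) ^ 2 := pow_le_pow_left₀ (pow_nonneg (hd0 1) _) ih 2
      _ = d (2 ^ n) ^ 2 * e0 ^ ((2 ^ n - 1) * 2) := by
        rw [mul_pow, ← pow_mul]
      _ ≤ (d (2 * 2 ^ n) * e0) * e0 ^ ((2 ^ n - 1) * 2) :=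
        mul_le_mul_of_nonneg_right (hrec (2 ^ n)) (pow_nonneg he0 _)
      _ = d (2 ^ (n + 1)) * e0 ^ (2 ^ (n + 1) - 1) := by
        rw [← e2, ← e3, pow_succ]
        ring
  -- conclude d 1 ≤ ‖L‖² * e0
  have hd1le : d 1 ≤ ‖L‖ ^ 2 * e0 := by
    by_contra hlast
    push_neg at hlast
    have hd1pos : 0 < d 1 := lt_of_le_of_lt (mul_nonneg (sq_nonneg _) he0) hlast
    rcases eq_or_lt_of_le he0 with he00 | he0pos
    · have h6 := hiter 1
      rw [← he00] at h6
      simp at h6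
      nlinarith
    rcases eq_or_lt_of_le (sq_nonneg ‖L‖) with ht00 | htpos
    · have h7 := hdk 1
      rw [← ht00] at h7
      simp at h7
      nlinarith
    set t : ℝ := ‖L‖ ^ 2 with htd
    set Kc : ℝ := ‖ψ‖ * (‖f‖ * ‖f‖) with hKc
    have hKc0 : 0 ≤ Kc := by positivity
    set r : ℝ := d 1 / (t * e0) with hr
    have hr1 : 1 < r := (one_lt_div (mul_pos htpos he0pos)).mpr hlast
    obtain ⟨n, hn⟩ := pow_unbounded_of_one_lt (Kc / e0) hr1
    have hNle : r ^ n ≤ r ^ (2 ^ n) :=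
      pow_le_pow_right₀ hr1.le (Nat.le_of_lt (Nat.lt_two_pow_self (n := n)))
    have key : r ^ (2 ^ n) * e0 ≤ Kc := by
      set N : ℕ := 2 ^ n with hN
      have hN1 : 1 ≤ N := Nat.one_le_two_pow
      have hne : t * e0 ≠ 0 := ne_of_gt (mul_pos htpos he0pos)
      have hd1e : d 1 = r * (t * e0) := (div_mul_cancel₀ (d 1) hne).symm
      have hdN : d N ≤ Kc * t ^ N := by
        have := hdk N
        calc d N ≤ ‖ψ‖ * ((t ^ N * ‖f‖) * ‖f‖) := this
        _ = Kc * t ^ N := by rw [hKc]; ring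
      have h1 : (r * (t * e0)) ^ N ≤ (Kc * t ^ N) * e0 ^ (N - 1) := by
        rw [← hd1e]
        calc d 1 ^ N ≤ d N * e0 ^ (N - 1) := hiter n
        _ ≤ (Kc * t ^ N) * e0 ^ (N - 1) :=
          mul_le_mul_of_nonneg_right hdN (pow_nonneg he0 _)
      have he0N : e0 ^ N = e0 ^ (N - 1) * e0 := by
        conv_lhs => rw [show N = (N - 1) + 1 from by omega]
        rw [pow_succ]
      have h8 : (r ^ N * e0) * (t ^ N * e0 ^ (N - 1)) ≤ Kc * (t ^ N * e0 ^ (N - 1)) := by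
        calc (r ^ N * e0) * (t ^ N * e0 ^ (N - 1)) = r ^ N * (t ^ N * (e0 ^ (N - 1) * e0)) := by
              ring
        _ = (r * (t * e0)) ^ N := by rw [mul_pow, mul_pow, ← he0N]
        _ ≤ (Kc * t ^ N) * e0 ^ (N - 1) := h1
        _ = Kc * (t ^ N * e0 ^ (N - 1)) := by ring
      exact le_of_mul_le_mul_right h8 (mul_pos (pow_pos htpos N) (pow_pos he0pos _))
    have : Kc / e0 < Kc / e0 :=
      lt_of_lt_of_le (lt_of_lt_of_le hn hNle) ((le_div_iff₀ he0pos).mpr key)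
    exact absurd this (lt_irrefl _)
  -- final contradiction
  have hX : (inner 𝓐 (Ladj f) (Ladj f) : 𝓐) = inner 𝓐 ((T ^ 1) f) f := by
    rw [pow_one]
    exact (hL (Ladj f) f).symm
  have hfin : ψ (inner 𝓐 (Ladj f) (Ladj f) : 𝓐) ≤ ‖L‖ ^ 2 * e0 := by
    rw [hX]
    exact le_trans (le_abs_self _) hd1le
  have hsplit : ψ (‖L‖ ^ 2 • (inner 𝓐 f f : 𝓐) - inner 𝓐 (Ladj f) (Ladj f))
      = ‖L‖ ^ 2 * e0 - ψ (inner 𝓐 (Ladj f) (Ladj f) : 𝓐) := by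
    rw [ψ.map_sub, ψ.map_smul, smul_eq_mul, he0def]
  rw [hsplit] at hψz
  linarith

end Aux

/-- If `{Λ i}` is a `∗`-`K`-`g`-frame with bounds `a, b` and
`L ∈ End*(H)`, then `{Λ i ∘ L*}` is a `∗`-`(LK)`-`g`-frame with bounds `a` and `‖L‖·b`:
for every `f`, `a⟪(LK)*f,(LK)*f⟫a* ≤ ∑ᵢ ⟪Λᵢ L*f, Λᵢ L*f⟫ ≤ ‖L‖² • (b⟪f,f⟫b*)`. -/
theorem star_LK_g_frame_comp_adjoint
    {𝓐 : Type*} [CStarAlgebra 𝓐] [PartialOrder 𝓐] [StarOrderedRing 𝓐]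
    {I : Type*} [Countable I]
    {H : Type*} [NormedAddCommGroup H] [NormedSpace ℂ H] [SMul 𝓐 H]
    [CStarModule 𝓐 H] [CompleteSpace H]
    {Hi : I → Type*} [∀ i, NormedAddCommGroup (Hi i)] [∀ i, NormedSpace ℂ (Hi i)]
    [∀ i, SMul 𝓐 (Hi i)] [∀ i, CStarModule 𝓐 (Hi i)] [∀ i, CompleteSpace (Hi i)]
    -- `K` and `L` are adjointable operators on `H` with adjoints `Kadj`, `Ladj`
    (K Kadj L Ladj : H →L[ℂ] H)
    (hK : ∀ x y : H, (inner 𝓐 (K x) y : 𝓐) = inner 𝓐 x (Kadj y))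
    (hL : ∀ x y : H, (inner 𝓐 (L x) y : 𝓐) = inner 𝓐 x (Ladj y))
    -- the family `Λ i ∈ End*(H, Hi i)` of adjointable operators
    (Λ : ∀ i, H →L[ℂ] Hi i) (Λadj : ∀ i, Hi i →L[ℂ] H)
    (hΛ : ∀ i (x : H) (y : Hi i), (inner 𝓐 (Λ i x) y : 𝓐) = inner 𝓐 x (Λadj i y))
    -- `{Λ i}` is a `∗`-`K`-`g`-frame with bounds `a`, `b`
    (a b : 𝓐) (ha : a ≠ 0) (hb : b ≠ 0)
    (hsum : ∀ x : H, Summable fun i => (inner 𝓐 (Λ i x) (Λ i x) : 𝓐))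
    (hlow : ∀ x : H,
      a * (inner 𝓐 (Kadj x) (Kadj x) : 𝓐) * star a ≤ ∑' i, (inner 𝓐 (Λ i x) (Λ i x) : 𝓐))
    (hup : ∀ x : H, ∑' i, (inner 𝓐 (Λ i x) (Λ i x) : 𝓐) ≤ b * (inner 𝓐 x x : 𝓐) * star b) :
    -- `{Λ i ∘ L*}` is a `∗`-`(LK)`-`g`-frame with bounds `a` and `‖L‖·b`
    (∀ f : H, Summable fun i => (inner 𝓐 (Λ i (Ladj f)) (Λ i (Ladj f)) : 𝓐)) ∧
    ∀ f : H,
      a * (inner 𝓐 (Kadj (Ladj f)) (Kadj (Ladj f)) : 𝓐) * star a ≤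
          ∑' i, (inner 𝓐 (Λ i (Ladj f)) (Λ i (Ladj f)) : 𝓐) ∧
      ∑' i, (inner 𝓐 (Λ i (Ladj f)) (Λ i (Ladj f)) : 𝓐) ≤
          ‖L‖ ^ 2 • (b * (inner 𝓐 f f : 𝓐) * star b) := by
  refine ⟨fun f => hsum (Ladj f), fun f => ⟨hlow (Ladj f), ?_⟩⟩
  have h1 := hup (Ladj f)
  have h2 := key_le' L Ladj hL f
  have h3 : b * (inner 𝓐 (Ladj f) (Ladj f) : 𝓐) * star b ≤
      b * (‖L‖ ^ 2 • (inner 𝓐 f f : 𝓐)) * star b :=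
    star_right_conjugate_le_conjugate h2 b
  calc ∑' i, (inner 𝓐 (Λ i (Ladj f)) (Λ i (Ladj f)) : 𝓐)
      ≤ b * (inner 𝓐 (Ladj f) (Ladj f) : 𝓐) * star b := h1
  _ ≤ b * (‖L‖ ^ 2 • (inner 𝓐 f f : 𝓐)) * star b := h3
  _ = ‖L‖ ^ 2 • (b * (inner 𝓐 f f : 𝓐) * star b) := by
      rw [mul_smul_comm, smul_mul_assoc]
end

section
/- Let K, L ∈ End*_𝒜(H) and let {Λᵢ}_{i∈I} be a ∗-K-g-frame for H with bounds A, B ∈ 𝒜. If Range(L) ⊆ Range(K) and K has closed range, then {Λᵢ}_{i∈I} is a ∗-L-g-frame for H: there exists λ > 0 such that λ·A⟨L*f, L*f⟩A* ≤ ∑_{i∈I}⟨Λᵢf, Λᵢf⟩ ≤ B⟨f, f⟩B* for all f ∈ H, i.e., {Λᵢ} is a ∗-L-g-frame with bounds √λ·A and B. -/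
open scoped RightActions

/-- The Hilbert C⋆-module class as it stood in Mathlib (December 2024): a right `A`-module
(action of `Aᵐᵒᵖ`) with an `A`-valued inner product, `A`-linear in the second variable
on the right. -/
class OldCStarModule (A E : Type*) [NonUnitalSemiring A] [StarRing A] [Module ℂ A]
    [AddCommGroup E] [Module ℂ E] [PartialOrder A] [SMul Aᵐᵒᵖ E] [Norm A] [Norm E]
    extends Inner A E where
  inner_add_right {x} {y} {z} : inner x (y + z) = inner x y + inner x z
  inner_self_nonneg {x} : 0 ≤ inner x x
  inner_self {x} : inner x x = 0 ↔ x = 0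
  inner_op_smul_right {a : A} {x y : E} : inner x (y <• a) = inner x y * a
  inner_smul_right_complex {z : ℂ} {x} {y} : inner x (z • y) = z • inner x y
  star_inner x y : star (inner x y) = inner y x
  norm_eq_sqrt_norm_inner_self x : ‖x‖ = √‖inner x x‖

namespace OldCStarModule

variable {A E : Type*} [CStarAlgebra A] [PartialOrder A] [StarOrderedRing A]
  [NormedAddCommGroup E] [NormedSpace ℂ E] [SMul Aᵐᵒᵖ E] [OldCStarModule A E]

lemma inner_zero_right' {x : E} : inner A x (0 : E) = 0 := by
  have h := OldCStarModule.inner_add_right (A := A) (x := x) (y := (0 : E)) (z := 0)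
  rw [add_zero] at h
  exact (left_eq_add.mp h)

lemma inner_neg_right' {x y : E} : inner A x (-y) = -inner A x y := by
  apply eq_neg_of_add_eq_zero_left
  rw [← OldCStarModule.inner_add_right, neg_add_cancel, inner_zero_right']

lemma inner_sub_right' {x y z : E} : inner A x (y - z) = inner A x y - inner A x z := by
  rw [sub_eq_add_neg, OldCStarModule.inner_add_right, inner_neg_right', ← sub_eq_add_neg]

lemma inner_sub_left' {x y z : E} : inner A (x - y) z = inner A x z - inner A y z := by
  rw [← OldCStarModule.star_inner z, inner_sub_right', star_sub, OldCStarModule.star_inner,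
    OldCStarModule.star_inner]

lemma inner_op_smul_left {a : A} {x y : E} : inner A (x <• a) y = star a * inner A x y := by
  rw [← OldCStarModule.star_inner y, OldCStarModule.inner_op_smul_right, star_mul,
    OldCStarModule.star_inner]

lemma inner_real_smul_right {r : ℝ} {x y : E} : inner A x ((r : ℂ) • y) = r • inner A x y := by
  rw [OldCStarModule.inner_smul_right_complex, Complex.coe_smul]

lemma inner_real_smul_left {r : ℝ} {x y : E} : inner A ((r : ℂ) • x) y = r • inner A x y := by
  rw [← OldCStarModule.star_inner y, inner_real_smul_right, star_smul, star_trivial,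
    OldCStarModule.star_inner]

variable (A) in
lemma norm_sq_eq {x : E} : ‖x‖ ^ 2 = ‖inner A x x‖ := by
  rw [OldCStarModule.norm_eq_sqrt_norm_inner_self (A := A) x, Real.sq_sqrt (norm_nonneg _)]

lemma inner_mul_inner_swap_le {x y : E} :
    inner A y x * inner A x y ≤ ‖x‖ ^ 2 • inner A y y := by
  rcases eq_or_ne x 0 with h | h
  · subst h
    rw [inner_zero_right', zero_mul]
    exact smul_nonneg (by positivity) OldCStarModule.inner_self_nonneg
  · set r : ℝ := ‖x‖ ^ 2 with hr
    have hrpos : 0 < r := by have := norm_pos_iff.mpr h; positivity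
    set a : A := inner A x y with ha
    have hsa : star a = inner A y x := OldCStarModule.star_inner x y
    set P : A := inner A y x * inner A x y with hP
    have h0 : (0 : A) ≤ inner A (x <• a - (r : ℂ) • y) (x <• a - (r : ℂ) • y) :=
      OldCStarModule.inner_self_nonneg
    have hexp : inner A (x <• a - (r : ℂ) • y) (x <• a - (r : ℂ) • y)
        = star a * inner A x x * a - r • P - r • P + r • (r • inner A y y) := by
      rw [inner_sub_left', inner_sub_right', inner_sub_right', inner_op_smul_left,
        inner_op_smul_left, OldCStarModule.inner_op_smul_right, inner_real_smul_right,
        inner_real_smul_left, inner_real_smul_left, inner_real_smul_right,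
        OldCStarModule.inner_op_smul_right, hsa, ← ha, mul_assoc]
      simp only [mul_smul_comm, hP, ha]
      abel
    have hX : star a * inner A x x * a ≤ r • P := by
      have hsa2 : IsSelfAdjoint (inner A x x) := .of_nonneg OldCStarModule.inner_self_nonneg
      calc star a * inner A x x * a ≤ ‖inner A x x‖ • (star a * a) :=
            CStarAlgebra.star_left_conjugate_le_norm_smul hsa2
        _ = r • P := by rw [hr, norm_sq_eq A, hsa, hP, ha]
    have h1 : (0 : A) ≤ r • (r • inner A y y) - r • P := by
      calc (0 : A) ≤ star a * inner A x x * a - r • P - r • P + r • (r • inner A y y) :=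
            hexp ▸ h0
        _ ≤ r • P - r • P - r • P + r • (r • inner A y y) := by gcongr
        _ = r • (r • inner A y y) - r • P := by abel
    rw [sub_nonneg, smul_le_smul_iff_of_pos_left hrpos] at h1
    exact h1

end OldCStarModule

/-- Key C*-algebra approximation lemma: if `p * e * (e * p) ≤ (c * ‖e p e‖) • q` for all
selfadjoint `e`, then `p ≤ c • q`. -/
lemma cstar_key_le {A : Type*} [CStarAlgebra A] [PartialOrder A] [StarOrderedRing A]
    (p q : A) (hp : 0 ≤ p) (hq : 0 ≤ q) (c : ℝ) (hc : 0 ≤ c)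
    (h : ∀ e : A, IsSelfAdjoint e → p * e * (e * p) ≤ (c * ‖e * p * e‖) • q) :
    p ≤ c • q := by
  have hpsa : IsSelfAdjoint p := .of_nonneg hp
  have hspec : ∀ t ∈ spectrum ℝ p, (0:ℝ) ≤ t := fun t ht => spectrum_nonneg_of_nonneg hp ht
  have key : ∀ n : ℕ, ∃ pn : A, pn ≤ c • q ∧ ‖p - pn‖ ≤ ((n:ℝ)+1)⁻¹ := by
    intro n
    set ε : ℝ := ((n:ℝ)+1)⁻¹ with hεdef
    have hεpos : 0 < ε := by positivity
    set g : ℝ → ℝ := fun t => (Real.sqrt (max t ε))⁻¹ with hgdef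
    have hmaxpos : ∀ t : ℝ, 0 < max t ε := fun t => lt_of_lt_of_le hεpos (le_max_right _ _)
    have hg : Continuous g := by
      have h1 : Continuous fun t : ℝ => Real.sqrt (max t ε) :=
        Real.continuous_sqrt.comp (continuous_id.max continuous_const)
      exact h1.inv₀ fun t => ne_of_gt (Real.sqrt_pos.mpr (hmaxpos t))
    have hgsq : ∀ t : ℝ, g t * g t = (max t ε)⁻¹ := by
      intro t
      rw [hgdef]
      simp only
      rw [← mul_inv, Real.mul_self_sqrt (hmaxpos t).le]
    set e : A := cfc g p with hedef
    have he : IsSelfAdjoint e := cfc_predicate g p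
    have e1 : p * e = cfc (fun t : ℝ => t * g t) p := by
      conv_lhs => rw [← cfc_id' ℝ p hpsa]
      rw [hedef]
      exact (cfc_mul _ _ p continuousOn_id hg.continuousOn).symm
    have e2 : e * p = cfc (fun t : ℝ => g t * t) p := by
      conv_lhs => rw [← cfc_id' ℝ p hpsa]
      rw [hedef]
      exact (cfc_mul _ _ p hg.continuousOn continuousOn_id).symm
    have e3 : p * e * (e * p) = cfc (fun t : ℝ => (t * g t) * (g t * t)) p := by
      rw [e1, e2]
      exact (cfc_mul _ _ p ((continuous_id.mul hg).continuousOn) ((hg.mul continuous_id).continuousOn)).symm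
    have e4 : e * p * e = cfc (fun t : ℝ => (g t * t) * g t) p := by
      rw [e2, hedef]
      exact (cfc_mul _ _ p ((hg.mul continuous_id).continuousOn) hg.continuousOn).symm
    -- norm bound for e * p * e
    have hepe : ‖e * p * e‖ ≤ 1 := by
      rw [e4]
      apply norm_cfc_le zero_le_one
      intro t ht
      have h0 : 0 ≤ t := hspec t ht
      have : (g t * t) * g t = t * (max t ε)⁻¹ := by
        rw [mul_comm (g t) t, mul_assoc, hgsq]
      rw [this, Real.norm_eq_abs, abs_of_nonneg (by positivity)]
      rw [mul_inv_le_iff₀ (hmaxpos t), one_mul]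
      exact le_max_left _ _
    refine ⟨p * e * (e * p), ?_, ?_⟩
    · refine (h e he).trans (smul_le_smul_of_nonneg_right ?_ hq)
      calc c * ‖e * p * e‖ ≤ c * 1 := mul_le_mul_of_nonneg_left hepe hc
        _ = c := mul_one c
    · have hsub : p - p * e * (e * p) = cfc (fun t : ℝ => t - (t * g t) * (g t * t)) p := by
        rw [e3]
        nth_rewrite 1 [← cfc_id' ℝ p hpsa]
        exact (cfc_sub _ _ p continuousOn_id (((continuous_id.mul hg).mul (hg.mul continuous_id)).continuousOn)).symm
      rw [hsub]
      apply norm_cfc_le hεpos.le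
      intro t ht
      have h0 : 0 ≤ t := hspec t ht
      have hm : (t * g t) * (g t * t) = t * t * (max t ε)⁻¹ := by
        rw [mul_assoc t (g t) _, ← mul_assoc (g t) (g t) t, hgsq, mul_comm ((max t ε)⁻¹) t,
          ← mul_assoc]
      have hle1 : t * t * (max t ε)⁻¹ ≤ t := by
        rw [mul_inv_le_iff₀ (hmaxpos t)]
        exact mul_le_mul_of_nonneg_left (le_max_left _ _) h0
      have hle2 : t - t * t * (max t ε)⁻¹ ≤ ε := by
        rcases le_total t ε with hcase | hcase
        · have : 0 ≤ t * t * (max t ε)⁻¹ := by positivity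
          linarith
        · have : max t ε = t := max_eq_left hcase
          rw [this]
          rcases eq_or_lt_of_le h0 with h0' | h0'
          · simp [← h0']
            exact hεpos.le
          · rw [mul_assoc, mul_inv_cancel₀ (ne_of_gt h0'), mul_one, sub_self]
            exact hεpos.le
      rw [hm, Real.norm_eq_abs, abs_of_nonneg (by linarith)]
      exact hle2
  choose pn hpn1 hpn2 using key
  have htend : Filter.Tendsto pn Filter.atTop (nhds p) := by
    rw [tendsto_iff_norm_sub_tendsto_zero]
    refine squeeze_zero (g := fun n : ℕ => ((n:ℝ)+1)⁻¹) (fun n => norm_nonneg _)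
      (fun n => ?_) ?_
    · rw [norm_sub_rev]; exact hpn2 n
    · exact tendsto_one_div_add_atTop_nhds_zero_nat.congr (by intro n; rw [one_div])
  have hmem : 0 ≤ c • q - p := by
    have := CStarAlgebra.isClosed_nonneg (A := A) |>.mem_of_tendsto
      (Filter.Tendsto.sub (tendsto_const_nhds (x := c • q)) htend)
      (Filter.Eventually.of_forall fun n => sub_nonneg.mpr (hpn1 n))
    exact this
  exact sub_nonneg.mp hmem

/-- If `{Λ i}` is a `∗`-`K`-`g`-frame with bounds `a, b`,
`Range(L) ⊆ Range(K)` and `K` has closed range, then `{Λ i}` is a `∗`-`L`-`g`-frame: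
there is `λ > 0` with `λ • (a⟪L*f,L*f⟫a*) ≤ ∑ᵢ ⟪Λᵢf,Λᵢf⟫ ≤ b⟪f,f⟫b*` for all `f`. -/
theorem star_L_g_frame_of_range_subset
    {𝓐 : Type*} [CStarAlgebra 𝓐] [PartialOrder 𝓐] [StarOrderedRing 𝓐]
    {I : Type*} [Countable I]
    {H : Type*} [NormedAddCommGroup H] [NormedSpace ℂ H] [SMul 𝓐ᵐᵒᵖ H]
    [OldCStarModule 𝓐 H] [CompleteSpace H]
    {Hi : I → Type*} [∀ i, NormedAddCommGroup (Hi i)] [∀ i, NormedSpace ℂ (Hi i)]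
    [∀ i, SMul 𝓐ᵐᵒᵖ (Hi i)] [∀ i, OldCStarModule 𝓐 (Hi i)] [∀ i, CompleteSpace (Hi i)]
    -- `K` and `L` are adjointable operators on `H` with adjoints `Kadj`, `Ladj`
    (K Kadj L Ladj : H →L[ℂ] H)
    (hK : ∀ x y : H, (inner 𝓐 (K x) y : 𝓐) = inner 𝓐 x (Kadj y))
    (hL : ∀ x y : H, (inner 𝓐 (L x) y : 𝓐) = inner 𝓐 x (Ladj y))
    -- the family `Λ i ∈ End*(H, Hi i)` of adjointable operators
    (Λ : ∀ i, H →L[ℂ] Hi i) (Λadj : ∀ i, Hi i →L[ℂ] H)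
    (hΛ : ∀ i (x : H) (y : Hi i), (inner 𝓐 (Λ i x) y : 𝓐) = inner 𝓐 x (Λadj i y))
    -- `{Λ i}` is a `∗`-`K`-`g`-frame with bounds `a`, `b`
    (a b : 𝓐) (ha : a ≠ 0) (hb : b ≠ 0)
    (hsum : ∀ x : H, Summable fun i => (inner 𝓐 (Λ i x) (Λ i x) : 𝓐))
    (hlow : ∀ x : H,
      a * (inner 𝓐 (Kadj x) (Kadj x) : 𝓐) * star a ≤ ∑' i, (inner 𝓐 (Λ i x) (Λ i x) : 𝓐))
    (hup : ∀ x : H, ∑' i, (inner 𝓐 (Λ i x) (Λ i x) : 𝓐) ≤ b * (inner 𝓐 x x : 𝓐) * star b)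
    -- `Range(L) ⊆ Range(K)` and `K` has closed range
    (hrange : Set.range L ⊆ Set.range K)
    (hKclosed : IsClosed (Set.range K)) :
    ∃ lam : ℝ, 0 < lam ∧ ∀ f : H,
      lam • (a * (inner 𝓐 (Ladj f) (Ladj f) : 𝓐) * star a) ≤
          ∑' i, (inner 𝓐 (Λ i f) (Λ i f) : 𝓐) ∧
      ∑' i, (inner 𝓐 (Λ i f) (Λ i f) : 𝓐) ≤ b * (inner 𝓐 f f : 𝓐) * star b := by
  classical
  -- Banach open-mapping constant for `K` onto its (closed) range
  have hRcoe : ((LinearMap.range (K : H →ₗ[ℂ] H) : Submodule ℂ H) : Set H) = Set.range K := by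
    ext x; simp [LinearMap.mem_range]
  haveI : CompleteSpace (LinearMap.range (K : H →ₗ[ℂ] H) : Submodule ℂ H) := by
    exact @IsClosed.completeSpace_coe _ _ _ _ (by rw [hRcoe]; exact hKclosed)
  set K' : H →L[ℂ] (LinearMap.range (K : H →ₗ[ℂ] H) : Submodule ℂ H) :=
    K.codRestrict _ (fun x => LinearMap.mem_range_self _ x) with hK'def
  have hsurj : Function.Surjective K' := by
    rintro ⟨y, hy⟩
    obtain ⟨x, hx⟩ := LinearMap.mem_range.mp hy
    exact ⟨x, Subtype.ext hx⟩
  obtain ⟨C, hCpos, hC⟩ := ContinuousLinearMap.exists_preimage_norm_le K' hsurj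
  set c : ℝ := (C * ‖L‖) ^ 2 with hcdef
  have hcnn : 0 ≤ c := sq_nonneg _
  have hc1pos : 0 < c + 1 := by positivity
  refine ⟨(c + 1)⁻¹, by positivity, fun f => ⟨?_, hup f⟩⟩
  set u : H := Ladj f with hudef
  set w : H := Kadj f with hwdef
  set p : 𝓐 := inner 𝓐 u u with hpdef
  set q : 𝓐 := inner 𝓐 w w with hqdef
  have hp : 0 ≤ p := OldCStarModule.inner_self_nonneg
  have hq : 0 ≤ q := OldCStarModule.inner_self_nonneg
  have hpsa : IsSelfAdjoint p := .of_nonneg hp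
  -- the main order inequality `p ≤ c • q` via the key lemma
  have hmain : p ≤ c • q := by
    refine cstar_key_le p q hp hq c hcnn ?_
    intro e he
    set x : H := u <• e with hxdef
    -- `⟪x, u⟫ = e * p`
    have hx1 : (inner 𝓐 x u : 𝓐) = e * p := by
      rw [hxdef, OldCStarModule.inner_op_smul_left, he.star_eq, hpdef]
    -- pick a controlled preimage `z` with `K z = L x`
    have hmem : L x ∈ LinearMap.range (K : H →ₗ[ℂ] H) := by
      obtain ⟨v, hv⟩ := hrange ⟨x, rfl⟩
      exact ⟨v, hv⟩
    obtain ⟨z, hz, hznorm⟩ := hC ⟨L x, hmem⟩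
    have hKz : K z = L x := congrArg Subtype.val hz
    have hznorm' : ‖z‖ ≤ C * ‖L x‖ := hznorm
    -- `⟪x, u⟫ = ⟪z, w⟫`
    have hinner : (inner 𝓐 x u : 𝓐) = inner 𝓐 z w := by
      calc (inner 𝓐 x u : 𝓐) = inner 𝓐 (L x) f := (hL x f).symm
        _ = inner 𝓐 (K z) f := by rw [hKz]
        _ = inner 𝓐 z w := hK z f
    -- rewrite the quadratic expression
    have hquad : p * e * (e * p) = (inner 𝓐 w z : 𝓐) * inner 𝓐 z w := by
      have h1 : (inner 𝓐 z w : 𝓐) = e * p := by rw [← hinner, hx1]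
      have h2 : (inner 𝓐 w z : 𝓐) = p * e := by
        rw [← OldCStarModule.star_inner, h1, star_mul, he.star_eq, hpsa.star_eq]
      rw [h1, h2, mul_assoc]
    -- Cauchy–Schwarz
    have hcs : (inner 𝓐 w z : 𝓐) * inner 𝓐 z w ≤ ‖z‖ ^ 2 • q :=
      OldCStarModule.inner_mul_inner_swap_le
    -- norm control
    have hxnorm : ‖x‖ ^ 2 = ‖e * p * e‖ := by
      rw [OldCStarModule.norm_sq_eq 𝓐, hxdef]
      congr 1
      rw [OldCStarModule.inner_op_smul_right, OldCStarModule.inner_op_smul_left, he.star_eq, ← hpdef]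
    have hzsq : ‖z‖ ^ 2 ≤ c * ‖e * p * e‖ := by
      have h1 : ‖z‖ ≤ C * ‖L‖ * ‖x‖ := by
        refine hznorm'.trans ?_
        rw [mul_assoc]
        exact mul_le_mul_of_nonneg_left (L.le_opNorm x) hCpos.le
      calc ‖z‖ ^ 2 ≤ (C * ‖L‖ * ‖x‖) ^ 2 := by
            apply pow_le_pow_left₀ (norm_nonneg z) h1
        _ = c * ‖x‖ ^ 2 := by rw [mul_pow, hcdef]
        _ = c * ‖e * p * e‖ := by rw [hxnorm]
    calc p * e * (e * p) = (inner 𝓐 w z : 𝓐) * inner 𝓐 z w := hquad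
      _ ≤ ‖z‖ ^ 2 • q := hcs
      _ ≤ (c * ‖e * p * e‖) • q := smul_le_smul_of_nonneg_right hzsq hq
  -- conclude
  have h2 : p ≤ (c + 1) • q := by
    refine hmain.trans (smul_le_smul_of_nonneg_right (by linarith) hq)
  have h3 : (c + 1)⁻¹ • p ≤ q := by
    have := smul_le_smul_of_nonneg_left h2 (inv_nonneg.mpr hc1pos.le)
    rwa [smul_smul, inv_mul_cancel₀ (ne_of_gt hc1pos), one_smul] at this
  calc (c + 1)⁻¹ • (a * p * star a) = a * ((c + 1)⁻¹ • p) * star a := by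
        rw [← smul_mul_assoc, ← mul_smul_comm]
    _ ≤ a * q * star a := star_right_conjugate_le_conjugate h3 a
    _ ≤ ∑' i, (inner 𝓐 (Λ i f) (Λ i f) : 𝓐) := hlow f
end

section
/- Let K ∈ End*_𝒜(H), let {Λᵢ}_{i∈I} be a ∗-K-g-frame for H with bounds A, B ∈ 𝒜, and let {Γᵢ ∈ End*_𝒜(H,Hᵢ)}_{i∈I} be a family of adjointable operators such that ∑_{i∈I}⟨Γᵢf, Γᵢf⟩ converges in norm for every f ∈ H. Suppose there is a constant M > 0 such that ‖∑_{i∈I}⟨(Λᵢ−Γᵢ)f, (Λᵢ−Γᵢ)f⟩‖ ≤ M·min(‖∑_{i∈I}⟨Λᵢf, Λᵢf⟩‖, ‖∑_{i∈I}⟨Γᵢf, Γᵢf⟩‖) for all f ∈ H. Then for every f ∈ H: (i) ‖∑_{i∈I}⟨Γᵢf, Γᵢf⟩‖^{1/2} ≤ (1+√M)·‖∑_{i∈I}⟨Λᵢf, Λᵢf⟩‖^{1/2} ≤ (1+√M)·‖B‖·‖f‖, and (ii) ‖A⟨K*f, K*f⟩A*‖ ≤ ‖∑_{i∈I}⟨Λᵢf,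 Λᵢf⟩‖ ≤ (1+√M)²·‖∑_{i∈I}⟨Γᵢf, Γᵢf⟩‖. -/
open scoped RightActions

/-- Real-number optimization. -/
private lemma aux_real_opt {r p q : ℝ} (hp : 0 ≤ p) (hq : 0 ≤ q)
    (h : ∀ t : ℝ, 0 < t → r ≤ (1 + t ^ 2) * p + (1 + t⁻¹ ^ 2) * q) :
    r ≤ (Real.sqrt p + Real.sqrt q) ^ 2 := by
  have key : ∀ ε : ℝ, 0 < ε → r ≤ p + q + 2 * Real.sqrt ((p + ε) * (q + ε)) := by
    intro ε hε
    have hpε : (0:ℝ) < p + ε := by linarith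
    have hqε : (0:ℝ) < q + ε := by linarith
    set t : ℝ := Real.sqrt (Real.sqrt (q + ε) / Real.sqrt (p + ε)) with ht
    have htpos : 0 < t := Real.sqrt_pos.2 (div_pos (Real.sqrt_pos.2 hqε) (Real.sqrt_pos.2 hpε))
    have ht2 : t ^ 2 = Real.sqrt (q + ε) / Real.sqrt (p + ε) :=
      Real.sq_sqrt (le_of_lt (div_pos (Real.sqrt_pos.2 hqε) (Real.sqrt_pos.2 hpε)))
    have hinv2 : t⁻¹ ^ 2 = Real.sqrt (p + ε) / Real.sqrt (q + ε) := by
      rw [inv_pow, ht2, inv_div]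
    have h1 : t ^ 2 * (p + ε) = Real.sqrt (q + ε) * Real.sqrt (p + ε) := by
      rw [ht2, div_mul_eq_mul_div, mul_div_assoc, Real.div_sqrt]
    have h2 : t⁻¹ ^ 2 * (q + ε) = Real.sqrt (p + ε) * Real.sqrt (q + ε) := by
      rw [hinv2, div_mul_eq_mul_div, mul_div_assoc, Real.div_sqrt]
    have hb1 : t ^ 2 * p ≤ Real.sqrt (q + ε) * Real.sqrt (p + ε) := by
      rw [← h1]; gcongr; linarith
    have hb2 : t⁻¹ ^ 2 * q ≤ Real.sqrt (p + ε) * Real.sqrt (q + ε) := by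
      rw [← h2]; gcongr; linarith
    have hsq : Real.sqrt ((p + ε) * (q + ε)) = Real.sqrt (p + ε) * Real.sqrt (q + ε) :=
      Real.sqrt_mul hpε.le _
    nlinarith [h t htpos]
  have hc : Continuous fun ε : ℝ => p + q + 2 * Real.sqrt ((p + ε) * (q + ε)) := by
    fun_prop
  have hlim : Filter.Tendsto (fun ε : ℝ => p + q + 2 * Real.sqrt ((p + ε) * (q + ε)))
      (nhdsWithin 0 (Set.Ioi 0)) (nhds (p + q + 2 * Real.sqrt (p * q))) := by
    have h0 : p + q + 2 * Real.sqrt ((p + 0) * (q + 0)) = p + q + 2 * Real.sqrt (p * q) := by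
      norm_num
    exact h0 ▸ (hc.continuousWithinAt (s := Set.Ioi 0) (x := 0))
  have hfin : r ≤ p + q + 2 * Real.sqrt (p * q) := by
    refine ge_of_tendsto hlim ?_
    filter_upwards [self_mem_nhdsWithin] with ε hε
    exact key ε hε
  have : (Real.sqrt p + Real.sqrt q) ^ 2 = p + q + 2 * Real.sqrt (p * q) := by
    rw [add_sq, Real.sq_sqrt hp, Real.sq_sqrt hq, Real.sqrt_mul hp]; ring
  linarith


/-- The Hilbert C⋆-module class with its older meaning (right `Aᵐᵒᵖ`-action, inner product
linear on the right: `⟪x, y <• a⟫ = ⟪x, y⟫ * a`). -/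
class CStarModuleRight (A E : Type*) [NonUnitalSemiring A] [StarRing A]
    [Module ℂ A] [AddCommGroup E] [Module ℂ E] [PartialOrder A] [SMul Aᵐᵒᵖ E] [Norm A] [Norm E]
    extends Inner A E where
  inner_add_right {x} {y} {z} : inner x (y + z) = inner x y + inner x z
  inner_self_nonneg {x} : 0 ≤ inner x x
  inner_self {x} : inner x x = 0 ↔ x = 0
  inner_op_smul_right {a : A} {x y : E} : inner x (y <• a) = inner x y * a
  inner_smul_right_complex {z : ℂ} {x} {y} : inner x (z • y) = z • inner x y
  star_inner x y : star (inner x y) = inner y x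
  norm_eq_sqrt_norm_inner_self x : ‖x‖ = √‖inner x x‖


namespace CStarModuleRight

variable {𝓐 : Type*} [CStarAlgebra 𝓐] [PartialOrder 𝓐]
    {E : Type*} [NormedAddCommGroup E] [NormedSpace ℂ E] [SMul 𝓐ᵐᵒᵖ E] [CStarModuleRight 𝓐 E]

lemma inner_add_left {x y z : E} : inner 𝓐 (x + y) z = inner 𝓐 x z + inner 𝓐 y z := by
  rw [← star_inner z (x + y), inner_add_right, star_add, star_inner, star_inner]

lemma inner_neg_right {x y : E} : inner 𝓐 x (-y) = -inner 𝓐 x y := by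
  rw [← neg_one_smul ℂ y, inner_smul_right_complex, neg_one_smul]

lemma inner_neg_left {x y : E} : inner 𝓐 (-x) y = -inner 𝓐 x y := by
  rw [← star_inner y (-x), inner_neg_right, star_neg, star_inner]

lemma inner_sub_right {x y z : E} : inner 𝓐 x (y - z) = inner 𝓐 x y - inner 𝓐 x z := by
  rw [sub_eq_add_neg, inner_add_right, inner_neg_right, ← sub_eq_add_neg]

lemma inner_sub_left {x y z : E} : inner 𝓐 (x - y) z = inner 𝓐 x z - inner 𝓐 y z := by
  rw [sub_eq_add_neg, inner_add_left, inner_neg_left, ← sub_eq_add_neg]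

lemma inner_smul_right_real {r : ℝ} {x y : E} : inner 𝓐 x (r • y) = r • inner 𝓐 x y := by
  rw [← Complex.coe_smul, inner_smul_right_complex, Complex.coe_smul]

lemma inner_smul_left_real {r : ℝ} {x y : E} : inner 𝓐 (r • x) y = r • inner 𝓐 x y := by
  rw [← star_inner y (r • x), inner_smul_right_real, ← Complex.coe_smul, star_smul,
    Complex.star_def, Complex.conj_ofReal, Complex.coe_smul, star_inner]

lemma norm_sq_eq {x : E} : ‖x‖ ^ 2 = ‖inner 𝓐 x x‖ := by
  rw [norm_eq_sqrt_norm_inner_self (A := 𝓐) x, Real.sq_sqrt (norm_nonneg _)]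

end CStarModuleRight

/-- The square-root triangle inequality for sums of C*-module inner products. -/
private lemma aux_sqrt_triangle {𝓐 : Type*} [CStarAlgebra 𝓐] [PartialOrder 𝓐]
    [StarOrderedRing 𝓐] {I : Type*}
    {Hi : I → Type*} [∀ i, NormedAddCommGroup (Hi i)] [∀ i, NormedSpace ℂ (Hi i)]
    [∀ i, SMul 𝓐ᵐᵒᵖ (Hi i)] [∀ i, CStarModuleRight 𝓐 (Hi i)]
    (v w : ∀ i, Hi i)
    (hv : Summable fun i => (inner 𝓐 (v i) (v i) : 𝓐))
    (hw : Summable fun i => (inner 𝓐 (w i) (w i) : 𝓐))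
    (hd : Summable fun i => (inner 𝓐 (v i - w i) (v i - w i) : 𝓐)) :
    Real.sqrt ‖∑' i, (inner 𝓐 (w i) (w i) : 𝓐)‖ ≤
      Real.sqrt ‖∑' i, (inner 𝓐 (v i) (v i) : 𝓐)‖ +
        Real.sqrt ‖∑' i, (inner 𝓐 (v i - w i) (v i - w i) : 𝓐)‖ := by
  -- per-index identity
  have hid : ∀ i, (inner 𝓐 (w i) (w i) : 𝓐) =
      inner 𝓐 (v i) (v i) + inner 𝓐 (v i - w i) (v i - w i) -
        ((inner 𝓐 (v i) (v i - w i) : 𝓐) + inner 𝓐 (v i - w i) (v i)) := by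
    intro i
    simp only [CStarModuleRight.inner_sub_left, CStarModuleRight.inner_sub_right]
    abel
  have hcross : Summable fun i => ((inner 𝓐 (v i) (v i - w i) : 𝓐) + inner 𝓐 (v i - w i) (v i)) := by
    have heq : (fun i => ((inner 𝓐 (v i) (v i - w i) : 𝓐) + inner 𝓐 (v i - w i) (v i))) =
        fun i => (inner 𝓐 (v i) (v i) : 𝓐) + inner 𝓐 (v i - w i) (v i - w i)
          - inner 𝓐 (w i) (w i) := by
      funext i; rw [hid i]; abel
    rw [heq]
    exact (hv.add hd).sub hw
  set Tv : 𝓐 := ∑' i, inner 𝓐 (v i) (v i) with hTv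
  set Tw : 𝓐 := ∑' i, inner 𝓐 (w i) (w i) with hTw
  set Td : 𝓐 := ∑' i, (inner 𝓐 (v i - w i) (v i - w i) : 𝓐) with hTd
  set S : 𝓐 := ∑' i, ((inner 𝓐 (v i) (v i - w i) : 𝓐) + inner 𝓐 (v i - w i) (v i)) with hS
  have hTwid : Tw = Tv + Td - S := by
    rw [hTw, hTv, hTd, hS, ← Summable.tsum_add hv hd, ← Summable.tsum_sub (hv.add hd) hcross]
    congr 1
    funext i
    rw [hid i]
  have hTw_nonneg : (0:𝓐) ≤ Tw := tsum_nonneg fun i => CStarModuleRight.inner_self_nonneg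
  have hTv_nonneg : (0:𝓐) ≤ Tv := tsum_nonneg fun i => CStarModuleRight.inner_self_nonneg
  have hTd_nonneg : (0:𝓐) ≤ Td := tsum_nonneg fun i => CStarModuleRight.inner_self_nonneg
  have key : ∀ t : ℝ, 0 < t → ‖Tw‖ ≤ (1 + t ^ 2) * ‖Tv‖ + (1 + t⁻¹ ^ 2) * ‖Td‖ := by
    intro t ht
    have hterm : ∀ i, (inner 𝓐 ((t : ℝ) • v i + (t⁻¹ : ℝ) • (v i - w i))
        ((t : ℝ) • v i + (t⁻¹ : ℝ) • (v i - w i)) : 𝓐) =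
        t ^ 2 • inner 𝓐 (v i) (v i) +
          ((inner 𝓐 (v i) (v i - w i) : 𝓐) + inner 𝓐 (v i - w i) (v i)) +
          t⁻¹ ^ 2 • inner 𝓐 (v i - w i) (v i - w i) := by
      intro i
      simp only [CStarModuleRight.inner_add_left, CStarModuleRight.inner_add_right,
        CStarModuleRight.inner_smul_left_real, CStarModuleRight.inner_smul_right_real, smul_add,
        smul_smul]
      rw [mul_inv_cancel₀ ht.ne', inv_mul_cancel₀ ht.ne']
      simp only [one_smul]
      rw [← pow_two, ← pow_two]
      abel
    have hpos : (0:𝓐) ≤ t ^ 2 • Tv + S + t⁻¹ ^ 2 • Td := by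
      have hts : (∑' i, (t ^ 2 • (inner 𝓐 (v i) (v i) : 𝓐) +
          ((inner 𝓐 (v i) (v i - w i) : 𝓐) + inner 𝓐 (v i - w i) (v i)) +
          t⁻¹ ^ 2 • (inner 𝓐 (v i - w i) (v i - w i) : 𝓐))) =
          t ^ 2 • Tv + S + t⁻¹ ^ 2 • Td := by
        rw [Summable.tsum_add ((hv.const_smul _).add hcross) (hd.const_smul _),
          Summable.tsum_add (hv.const_smul _) hcross, Summable.tsum_const_smul _ hv, Summable.tsum_const_smul _ hd]
      rw [← hts]
      refine tsum_nonneg fun i => ?_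
      rw [← hterm i]
      exact CStarModuleRight.inner_self_nonneg
    have h1 : -S ≤ t ^ 2 • Tv + t⁻¹ ^ 2 • Td := by
      rw [← sub_nonneg, sub_neg_eq_add]
      have hre : t ^ 2 • Tv + t⁻¹ ^ 2 • Td + S = t ^ 2 • Tv + S + t⁻¹ ^ 2 • Td := by abel
      rw [hre]; exact hpos
    have hle : Tw ≤ (1 + t ^ 2) • Tv + (1 + t⁻¹ ^ 2) • Td := by
      rw [hTwid]
      have h2 := add_le_add_right h1 (Tv + Td)
      calc Tv + Td - S = Tv + Td + -S := by abel
        _ ≤ Tv + Td + (t ^ 2 • Tv + t⁻¹ ^ 2 • Td) := h2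
        _ = (1 + t ^ 2) • Tv + (1 + t⁻¹ ^ 2) • Td := by
            rw [add_smul, add_smul, one_smul, one_smul]; abel
    calc ‖Tw‖ ≤ ‖(1 + t ^ 2) • Tv + (1 + t⁻¹ ^ 2) • Td‖ :=
          CStarAlgebra.norm_le_norm_of_nonneg_of_le hTw_nonneg hle
      _ ≤ ‖(1 + t ^ 2) • Tv‖ + ‖(1 + t⁻¹ ^ 2) • Td‖ := norm_add_le _ _
      _ ≤ (1 + t ^ 2) * ‖Tv‖ + (1 + t⁻¹ ^ 2) * ‖Td‖ := by
          rw [norm_smul, norm_smul, Real.norm_eq_abs, Real.norm_eq_abs,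
            abs_of_pos (by positivity), abs_of_pos (by positivity)]
  have hopt := aux_real_opt (norm_nonneg Tv) (norm_nonneg Td) key
  calc Real.sqrt ‖Tw‖ ≤ Real.sqrt ((Real.sqrt ‖Tv‖ + Real.sqrt ‖Td‖) ^ 2) :=
        Real.sqrt_le_sqrt hopt
    _ = Real.sqrt ‖Tv‖ + Real.sqrt ‖Td‖ := Real.sqrt_sq (by positivity)


/-- Perturbation estimates: if `{Λ i}` is a `∗`-`K`-`g`-frame with bounds
`a, b`, `{Γ i}` is a family with convergent sums and
`‖∑ᵢ ⟪(Λᵢ−Γᵢ)f,(Λᵢ−Γᵢ)f⟫‖ ≤ M·min(‖∑ᵢ ⟪Λᵢf,Λᵢf⟫‖, ‖∑ᵢ ⟪Γᵢf,Γᵢf⟫‖)`, then for every `f`,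
(i) `‖∑ᵢ⟪Γᵢf,Γᵢf⟫‖^½ ≤ (1+√M)·‖∑ᵢ⟪Λᵢf,Λᵢf⟫‖^½ ≤ (1+√M)·‖b‖·‖f‖` and
(ii) `‖a⟪K*f,K*f⟫a*‖ ≤ ‖∑ᵢ⟪Λᵢf,Λᵢf⟫‖ ≤ (1+√M)²·‖∑ᵢ⟪Γᵢf,Γᵢf⟫‖`. -/
theorem star_K_g_frame_perturbation_estimates
    {𝓐 : Type*} [CStarAlgebra 𝓐] [PartialOrder 𝓐] [StarOrderedRing 𝓐]
    {I : Type*} [Countable I]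
    {H : Type*} [NormedAddCommGroup H] [NormedSpace ℂ H] [SMul 𝓐ᵐᵒᵖ H]
    [CStarModuleRight 𝓐 H] [CompleteSpace H]
    {Hi : I → Type*} [∀ i, NormedAddCommGroup (Hi i)] [∀ i, NormedSpace ℂ (Hi i)]
    [∀ i, SMul 𝓐ᵐᵒᵖ (Hi i)] [∀ i, CStarModuleRight 𝓐 (Hi i)] [∀ i, CompleteSpace (Hi i)]
    -- `K` is an adjointable operator on `H` with adjoint `Kadj`
    (K Kadj : H →L[ℂ] H)
    (hK : ∀ x y : H, (inner 𝓐 (K x) y : 𝓐) = inner 𝓐 x (Kadj y))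
    -- the family `Λ i ∈ End*(H, Hi i)` of adjointable operators
    (Λ : ∀ i, H →L[ℂ] Hi i) (Λadj : ∀ i, Hi i →L[ℂ] H)
    (hΛ : ∀ i (x : H) (y : Hi i), (inner 𝓐 (Λ i x) y : 𝓐) = inner 𝓐 x (Λadj i y))
    -- `{Λ i}` is a `∗`-`K`-`g`-frame with bounds `a`, `b`
    (a b : 𝓐) (ha : a ≠ 0) (hb : b ≠ 0)
    (hsum : ∀ x : H, Summable fun i => (inner 𝓐 (Λ i x) (Λ i x) : 𝓐))
    (hlow : ∀ x : H,
      a * (inner 𝓐 (Kadj x) (Kadj x) : 𝓐) * star a ≤ ∑' i, (inner 𝓐 (Λ i x) (Λ i x) : 𝓐))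
    (hup : ∀ x : H, ∑' i, (inner 𝓐 (Λ i x) (Λ i x) : 𝓐) ≤ b * (inner 𝓐 x x : 𝓐) * star b)
    -- the family `Γ i ∈ End*(H, Hi i)` of adjointable operators with convergent sums
    (Γ : ∀ i, H →L[ℂ] Hi i) (Γadj : ∀ i, Hi i →L[ℂ] H)
    (hΓ : ∀ i (x : H) (y : Hi i), (inner 𝓐 (Γ i x) y : 𝓐) = inner 𝓐 x (Γadj i y))
    (hsumΓ : ∀ x : H, Summable fun i => (inner 𝓐 (Γ i x) (Γ i x) : 𝓐))
    (hsumdiff : ∀ x : H, Summable fun i => (inner 𝓐 (Λ i x - Γ i x) (Λ i x - Γ i x) : 𝓐))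
    -- the perturbation condition
    (M : ℝ) (hM : 0 < M)
    (hpert : ∀ f : H, ‖∑' i, (inner 𝓐 (Λ i f - Γ i f) (Λ i f - Γ i f) : 𝓐)‖ ≤
      M * min ‖∑' i, (inner 𝓐 (Λ i f) (Λ i f) : 𝓐)‖ ‖∑' i, (inner 𝓐 (Γ i f) (Γ i f) : 𝓐)‖) :
    ∀ f : H,
      (Real.sqrt ‖∑' i, (inner 𝓐 (Γ i f) (Γ i f) : 𝓐)‖ ≤
          (1 + Real.sqrt M) * Real.sqrt ‖∑' i, (inner 𝓐 (Λ i f) (Λ i f) : 𝓐)‖ ∧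
        (1 + Real.sqrt M) * Real.sqrt ‖∑' i, (inner 𝓐 (Λ i f) (Λ i f) : 𝓐)‖ ≤
          (1 + Real.sqrt M) * (‖b‖ * ‖f‖)) ∧
      (‖a * (inner 𝓐 (Kadj f) (Kadj f) : 𝓐) * star a‖ ≤
          ‖∑' i, (inner 𝓐 (Λ i f) (Λ i f) : 𝓐)‖ ∧
        ‖∑' i, (inner 𝓐 (Λ i f) (Λ i f) : 𝓐)‖ ≤
          (1 + Real.sqrt M) ^ 2 * ‖∑' i, (inner 𝓐 (Γ i f) (Γ i f) : 𝓐)‖) := by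
  intro f
  set p : ℝ := ‖∑' i, (inner 𝓐 (Λ i f) (Λ i f) : 𝓐)‖ with hp
  set q : ℝ := ‖∑' i, (inner 𝓐 (Γ i f) (Γ i f) : 𝓐)‖ with hq
  set dq : ℝ := ‖∑' i, (inner 𝓐 (Λ i f - Γ i f) (Λ i f - Γ i f) : 𝓐)‖ with hdq
  have hppos : 0 ≤ p := norm_nonneg _
  have hqpos : 0 ≤ q := norm_nonneg _
  have hM' : 0 ≤ Real.sqrt M := Real.sqrt_nonneg M
  have hd_le_p : dq ≤ M * p :=
    (hpert f).trans (mul_le_mul_of_nonneg_left (min_le_left _ _) hM.le)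
  have hd_le_q : dq ≤ M * q :=
    (hpert f).trans (mul_le_mul_of_nonneg_left (min_le_right _ _) hM.le)
  have hsd_p : Real.sqrt dq ≤ Real.sqrt M * Real.sqrt p := by
    rw [← Real.sqrt_mul hM.le]
    exact Real.sqrt_le_sqrt hd_le_p
  have hsd_q : Real.sqrt dq ≤ Real.sqrt M * Real.sqrt q := by
    rw [← Real.sqrt_mul hM.le]
    exact Real.sqrt_le_sqrt hd_le_q
  have tri1 : Real.sqrt q ≤ Real.sqrt p + Real.sqrt dq :=
    aux_sqrt_triangle (fun i => Λ i f) (fun i => Γ i f) (hsum f) (hsumΓ f) (hsumdiff f)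
  have hdiffswap : (fun i => (inner 𝓐 (Γ i f - Λ i f) (Γ i f - Λ i f) : 𝓐)) =
      fun i => (inner 𝓐 (Λ i f - Γ i f) (Λ i f - Γ i f) : 𝓐) := by
    funext i
    rw [← neg_sub (Λ i f) (Γ i f), CStarModuleRight.inner_neg_left, CStarModuleRight.inner_neg_right,
      neg_neg]
  have tri2 : Real.sqrt p ≤ Real.sqrt q + Real.sqrt dq := by
    have := aux_sqrt_triangle (fun i => Γ i f) (fun i => Λ i f) (hsumΓ f) (hsum f)
      (by rw [hdiffswap]; exact hsumdiff f)
    rwa [hdiffswap] at this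
  have part_i1 : Real.sqrt q ≤ (1 + Real.sqrt M) * Real.sqrt p := by
    have := tri1.trans (add_le_add_right hsd_p _)
    calc Real.sqrt q ≤ Real.sqrt p + Real.sqrt M * Real.sqrt p := this
      _ = (1 + Real.sqrt M) * Real.sqrt p := by ring
  have hsp_bf : Real.sqrt p ≤ ‖b‖ * ‖f‖ := by
    have h1 : p ≤ ‖b * (inner 𝓐 f f : 𝓐) * star b‖ :=
      CStarAlgebra.norm_le_norm_of_nonneg_of_le
        (tsum_nonneg fun i => CStarModuleRight.inner_self_nonneg) (hup f)
    have h2 : ‖b * (inner 𝓐 f f : 𝓐) * star b‖ ≤ (‖b‖ * ‖f‖) ^ 2 := by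
      calc ‖b * (inner 𝓐 f f : 𝓐) * star b‖ ≤ ‖b * (inner 𝓐 f f : 𝓐)‖ * ‖star b‖ := norm_mul_le _ _
        _ ≤ ‖b‖ * ‖(inner 𝓐 f f : 𝓐)‖ * ‖star b‖ := by gcongr; exact norm_mul_le _ _
        _ = ‖b‖ * ‖f‖ ^ 2 * ‖b‖ := by rw [norm_star, CStarModuleRight.norm_sq_eq (𝓐 := 𝓐)]
        _ = (‖b‖ * ‖f‖) ^ 2 := by ring
    calc Real.sqrt p ≤ Real.sqrt ((‖b‖ * ‖f‖) ^ 2) := Real.sqrt_le_sqrt (h1.trans h2)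
      _ = ‖b‖ * ‖f‖ := Real.sqrt_sq (by positivity)
  have part_i2 : (1 + Real.sqrt M) * Real.sqrt p ≤ (1 + Real.sqrt M) * (‖b‖ * ‖f‖) :=
    mul_le_mul_of_nonneg_left hsp_bf (by positivity)
  have part_ii1 : ‖a * (inner 𝓐 (Kadj f) (Kadj f) : 𝓐) * star a‖ ≤ p :=
    CStarAlgebra.norm_le_norm_of_nonneg_of_le
      (star_right_conjugate_nonneg CStarModuleRight.inner_self_nonneg a) (hlow f)
  have part_ii2 : p ≤ (1 + Real.sqrt M) ^ 2 * q := by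
    have h1 : Real.sqrt p ≤ (1 + Real.sqrt M) * Real.sqrt q := by
      have := tri2.trans (add_le_add_right hsd_q _)
      calc Real.sqrt p ≤ Real.sqrt q + Real.sqrt M * Real.sqrt q := this
        _ = (1 + Real.sqrt M) * Real.sqrt q := by ring
    have h2 : (Real.sqrt p) ^ 2 ≤ ((1 + Real.sqrt M) * Real.sqrt q) ^ 2 :=
      pow_le_pow_left₀ (Real.sqrt_nonneg p) h1 2
    rwa [Real.sq_sqrt hppos, mul_pow, Real.sq_sqrt hqpos] at h2
  exact ⟨⟨part_i1, part_i2⟩, ⟨part_ii1, part_ii2⟩⟩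
end

section
/- Let K, L ∈ End*_𝒜(H) with Range(L) ⊆ Range(K) and K of closed range, let {Λᵢ}_{i∈I} be a ∗-K-g-frame for H with bounds A, B ∈ 𝒜 where A is invertible in 𝒜, and let {Γᵢ ∈ End*_𝒜(H,Hᵢ)}_{i∈I} be a family of adjointable operators such that ∑_{i∈I}⟨Γᵢf, Γᵢf⟩ converges in norm for every f ∈ H and whose analysis operator f ↦ (Γᵢf)_{i∈I} into ⊕_{i∈I}Hᵢ has closed range. If there is a constant M > 0 such that ‖∑_{i∈I}⟨(Λᵢ−Γᵢ)f, (Λᵢ−Γᵢ)f⟩‖ ≤ M·min(‖∑_{i∈I}⟨Λᵢf, Λᵢf⟩‖, ‖∑_{i∈I}⟨Γᵢf, Γᵢf⟩‖) for all f ∈ H, then {Γᵢ}_{i∈I} is a ∗-L-g-frame for H: there exist scalars c, d > 0 with c·⟨L*f, L*f⟩ ≤ ∑_{i∈I}⟨Γᵢf, Γᵢf⟩ ≤ d·⟨f, f⟩ for all f ∈ H. -/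
open scoped RightActions

section AuxLoc

variable {𝓐 : Type*} [CStarAlgebra 𝓐] [PartialOrder 𝓐] [StarOrderedRing 𝓐]

lemma real_smul_nonneg {x : 𝓐} (hx : 0 ≤ x) {r : ℝ} (hr : 0 ≤ r) : 0 ≤ r • x := by
  have h := star_left_conjugate_nonneg hx (Real.sqrt r • (1 : 𝓐))
  have hstar : star (Real.sqrt r • (1 : 𝓐)) = Real.sqrt r • (1 : 𝓐) := by
    simp [star_smul]
  rw [hstar] at h
  calc (0 : 𝓐) ≤ (Real.sqrt r • (1 : 𝓐)) * x * (Real.sqrt r • (1 : 𝓐)) := h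
    _ = r • x := by
        rw [smul_mul_assoc, one_mul, mul_smul_comm, mul_one, smul_smul,
          Real.mul_self_sqrt hr]

lemma aux_loc {p q : 𝓐} (hp : 0 ≤ p) (hq : 0 ≤ q) {C : ℝ} (hC : 0 ≤ C)
    (h : ∀ a : 𝓐, ‖star a * p * a‖ ≤ C * ‖star a * q * a‖) : p ≤ C • q := by
  rcases subsingleton_or_nontrivial 𝓐 with hS | hS
  · exact le_of_eq (Subsingleton.elim _ _)
  have hq' : IsSelfAdjoint q := .of_nonneg hq
  have key : ∀ ε : ℝ, 0 < ε → p ≤ C • q + (C * ε) • 1 := by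
    intro ε hε
    have hmax : ∀ t : ℝ, (0 : ℝ) < max t 0 + ε := fun t => by positivity
    set g : ℝ → ℝ := fun t => Real.sqrt (max t 0 + ε) with hgdef
    set f : ℝ → ℝ := fun t => (Real.sqrt (max t 0 + ε))⁻¹ with hfdef
    have hgc : Continuous g :=
      Real.continuous_sqrt.comp ((continuous_id.max continuous_const).add continuous_const)
    have hgne : ∀ t, g t ≠ 0 := fun t => (Real.sqrt_pos.2 (hmax t)).ne'
    have hfc : Continuous f := hgc.inv₀ hgne
    set r := cfc f q with hrdef
    set s := cfc g q with hsdef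
    have hr_sa : IsSelfAdjoint r := cfc_predicate f q
    have hs_sa : IsSelfAdjoint s := cfc_predicate g q
    have hspec : ∀ t ∈ spectrum ℝ q, 0 ≤ t := fun t ht => spectrum_nonneg_of_nonneg hq ht
    have hsr : s * r = 1 := by
      rw [hsdef, hrdef, ← cfc_mul g f q hgc.continuousOn hfc.continuousOn]
      calc cfc (fun t => g t * f t) q = cfc (fun _ : ℝ => (1 : ℝ)) q :=
            cfc_congr fun t _ => mul_inv_cancel₀ (hgne t)
        _ = 1 := cfc_const_one ℝ q
    have hrs : r * s = 1 := by
      rw [hsdef, hrdef, ← cfc_mul f g q hfc.continuousOn hgc.continuousOn]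
      calc cfc (fun t => f t * g t) q = cfc (fun _ : ℝ => (1 : ℝ)) q :=
            cfc_congr fun t _ => inv_mul_cancel₀ (hgne t)
        _ = 1 := cfc_const_one ℝ q
    have hfid : cfc (fun t : ℝ => f t * t) q = r * q := by
      rw [hrdef, cfc_mul f (fun t => t) q hfc.continuousOn continuousOn_id, cfc_id' ℝ q]
    have hrqr : r * q * r = cfc (fun t : ℝ => f t * t * f t) q := by
      rw [cfc_mul (fun t => f t * t) f q ((hfc.mul continuous_id).continuousOn)
        hfc.continuousOn, hfid]
    have hle1 : r * q * r ≤ 1 := by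
      rw [hrqr]
      calc cfc (fun t : ℝ => f t * t * f t) q ≤ cfc (fun _ : ℝ => (1 : ℝ)) q := by
            refine cfc_mono (fun t ht => ?_)
              ((hfc.mul continuous_id).mul hfc).continuousOn continuous_const.continuousOn
            have ht0 : 0 ≤ t := hspec t ht
            have hmx : max t 0 = t := max_eq_left ht0
            have : f t * t * f t = t * (max t 0 + ε)⁻¹ := by
              rw [hfdef]
              simp only
              rw [mul_comm _ t, mul_assoc, ← mul_inv,
                Real.mul_self_sqrt (hmax t).le]
            rw [this, hmx, ← div_eq_mul_inv]
            exact div_le_one_of_le₀ (by linarith) (by positivity)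
        _ = 1 := cfc_const_one ℝ q
    have hrqr_nonneg : 0 ≤ r * q * r := by
      have := star_left_conjugate_nonneg hq r
      rwa [hr_sa.star_eq] at this
    have hnorm1 : ‖r * q * r‖ ≤ 1 := by
      calc ‖r * q * r‖ ≤ ‖(1 : 𝓐)‖ :=
            CStarAlgebra.norm_le_norm_of_nonneg_of_le hrqr_nonneg hle1
        _ = 1 := norm_one
    have hrpr_nonneg : 0 ≤ r * p * r := by
      have := star_left_conjugate_nonneg hp r
      rwa [hr_sa.star_eq] at this
    have hC' : ‖r * p * r‖ ≤ C := by
      have h1 := h r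
      rw [hr_sa.star_eq] at h1
      exact h1.trans (mul_le_of_le_one_right hC hnorm1)
    have hple : r * p * r ≤ algebraMap ℝ 𝓐 C := by
      calc r * p * r ≤ algebraMap ℝ 𝓐 ‖r * p * r‖ :=
            IsSelfAdjoint.le_algebraMap_norm_self (.of_nonneg hrpr_nonneg)
        _ ≤ algebraMap ℝ 𝓐 C := by
            rw [← sub_nonneg, ← map_sub, Algebra.algebraMap_eq_smul_one]
            exact real_smul_nonneg (by simpa using star_mul_self_nonneg (1 : 𝓐))
              (by linarith)
    have hconj := star_left_conjugate_le_conjugate hple s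
    rw [hs_sa.star_eq] at hconj
    have hLHS : s * (r * p * r) * s = p := by
      have : s * (r * p * r) * s = (s * r) * p * (r * s) := by noncomm_ring
      rw [this, hsr, hrs, one_mul, mul_one]
    have hss : s * s = q + ε • 1 := by
      rw [hsdef, ← cfc_mul g g q hgc.continuousOn hgc.continuousOn]
      calc cfc (fun t => g t * g t) q = cfc (fun t : ℝ => t + ε) q := by
            refine cfc_congr fun t ht => ?_
            rw [hgdef]
            simp only
            rw [Real.mul_self_sqrt (hmax t).le, max_eq_left (hspec t ht)]
        _ = q + ε • 1 := by
            rw [cfc_add_const ε (fun t : ℝ => t) q continuousOn_id, cfc_id' ℝ q,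
              Algebra.algebraMap_eq_smul_one]
    have hRHS : s * algebraMap ℝ 𝓐 C * s = C • q + (C * ε) • 1 := by
      rw [Algebra.algebraMap_eq_smul_one, mul_smul_comm, mul_one, smul_mul_assoc,
        hss, smul_add, smul_smul]
    rw [hLHS] at hconj
    calc p ≤ s * algebraMap ℝ 𝓐 C * s := hconj
      _ = C • q + (C * ε) • 1 := hRHS
  refine ge_of_tendsto (f := fun ε : ℝ => C • q + (C * ε) • (1 : 𝓐))
    (x := nhdsWithin 0 (Set.Ioi 0)) ?_ ?_
  · have hcont : Continuous (fun ε : ℝ => C • q + (C * ε) • (1 : 𝓐)) := by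
      fun_prop
    have h0 := hcont.tendsto 0
    simp only [mul_zero, zero_smul, add_zero] at h0
    exact h0.mono_left nhdsWithin_le_nhds
  · exact eventually_mem_nhdsWithin.mono fun ε hε => key ε hε

end AuxLoc

section AuxMod

variable {𝓐 : Type*} [CStarAlgebra 𝓐] [PartialOrder 𝓐] [StarOrderedRing 𝓐]
variable {E : Type*} [NormedAddCommGroup E] [NormedSpace ℂ E] [SMul 𝓐 E] [CStarModule 𝓐 E]
variable {F : Type*} [NormedAddCommGroup F] [NormedSpace ℂ F] [SMul 𝓐 F] [CStarModule 𝓐 F]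

lemma inner_sub_left' (x y z : E) :
    (inner 𝓐 (x - y) z : 𝓐) = inner 𝓐 x z - inner 𝓐 y z := by
  have h : (inner 𝓐 (x - y) z : 𝓐) + inner 𝓐 y z = inner 𝓐 x z := by
    rw [← CStarModule.inner_add_left, sub_add_cancel]
  exact eq_sub_of_add_eq h

lemma inner_sub_right' (x y z : E) :
    (inner 𝓐 x (y - z) : 𝓐) = inner 𝓐 x y - inner 𝓐 x z := by
  rw [← CStarModule.star_inner, inner_sub_left', star_sub, CStarModule.star_inner,
    CStarModule.star_inner]

lemma inner_neg_neg' (x : E) : (inner 𝓐 (-x) (-x) : 𝓐) = inner 𝓐 x x := by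
  have h1 : (-x : E) = (0 : E) - x := by rw [zero_sub]
  rw [h1, inner_sub_left', inner_sub_right', inner_sub_right']
  have h0 : ∀ y : E, (inner 𝓐 (0 : E) y : 𝓐) = 0 := by
    intro y
    have := inner_sub_left' (𝓐 := 𝓐) x x y
    simpa [sub_self] using this
  have h0' : ∀ y : E, (inner 𝓐 y (0 : E) : 𝓐) = 0 := by
    intro y
    rw [← CStarModule.star_inner, h0, star_zero]
  rw [h0, h0']
  simp

/-- Adjointable maps are module maps. -/
lemma adjointable_op_smul_s8 (T : E → F) (S : F → E)
    (hT : ∀ x y, (inner 𝓐 (T x) y : 𝓐) = inner 𝓐 x (S y)) (f : E) (a : 𝓐) :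
    T (a • f) = a • T f := by
  have key : (inner 𝓐 (T (a • f) - a • T f) (T (a • f) - a • T f) : 𝓐) = 0 := by
    set d : F := T (a • f) - a • T f with hd
    rw [hd]
    nth_rewrite 1 [inner_sub_left']
    rw [hT (a • f) d, CStarModule.inner_op_smul_left, CStarModule.inner_op_smul_left,
      hT f d, sub_self]
  have := CStarModule.inner_self (A := 𝓐).mp key
  exact sub_eq_zero.mp this

/-- Parallelogram-type estimate. -/
lemma inner_le_aux (u v : E) :
    (inner 𝓐 v v : 𝓐) ≤ inner 𝓐 u u + inner 𝓐 u u
      + inner 𝓐 (v - u) (v - u) + inner 𝓐 (v - u) (v - u) := by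
  rw [← sub_nonneg]
  have h0 : (0 : 𝓐) ≤ inner 𝓐 (u - (v - u)) (u - (v - u)) := CStarModule.inner_self_nonneg
  have hexp : (inner 𝓐 (u - (v - u)) (u - (v - u)) : 𝓐)
      = inner 𝓐 u u + inner 𝓐 u u + inner 𝓐 (v - u) (v - u) + inner 𝓐 (v - u) (v - u)
        - inner 𝓐 v v := by
    simp only [inner_sub_left', inner_sub_right', CStarModule.inner_add_left,
      CStarModule.inner_add_right]
    abel
  rwa [hexp] at h0

end AuxMod

set_option maxHeartbeats 2000000 in
/-- Perturbation: let `Range(L) ⊆ Range(K)` with `K` of closed range, let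
`{Λ i}` be a `∗`-`K`-`g`-frame with bounds `a, b` (`a` invertible), and let `{Γ i}` be a
family with convergent sums whose analysis operator has closed range, satisfying the
perturbation condition with constant `M > 0`. Then `{Γ i}` is a `∗`-`L`-`g`-frame: there are
scalars `c, d > 0` with `c•⟪L*f,L*f⟫ ≤ ∑ᵢ ⟪Γᵢf,Γᵢf⟫ ≤ d•⟪f,f⟫` for all `f`. -/
theorem star_L_g_frame_of_perturbation
    {𝓐 : Type*} [CStarAlgebra 𝓐] [PartialOrder 𝓐] [StarOrderedRing 𝓐]
    {I : Type*} [Countable I]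
    {H : Type*} [NormedAddCommGroup H] [NormedSpace ℂ H] [SMul 𝓐 H]
    [CStarModule 𝓐 H] [CompleteSpace H]
    {Hi : I → Type*} [∀ i, NormedAddCommGroup (Hi i)] [∀ i, NormedSpace ℂ (Hi i)]
    [∀ i, SMul 𝓐 (Hi i)] [∀ i, CStarModule 𝓐 (Hi i)] [∀ i, CompleteSpace (Hi i)]
    -- `K` and `L` are adjointable operators on `H` with adjoints `Kadj`, `Ladj`
    (K Kadj L Ladj : H →L[ℂ] H)
    (hK : ∀ x y : H, (inner 𝓐 (K x) y : 𝓐) = inner 𝓐 x (Kadj y))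
    (hL : ∀ x y : H, (inner 𝓐 (L x) y : 𝓐) = inner 𝓐 x (Ladj y))
    -- `Range(L) ⊆ Range(K)` and `K` has closed range
    (hrange : Set.range L ⊆ Set.range K)
    (hKclosed : IsClosed (Set.range K))
    -- the family `Λ i ∈ End*(H, Hi i)` of adjointable operators
    (Λ : ∀ i, H →L[ℂ] Hi i) (Λadj : ∀ i, Hi i →L[ℂ] H)
    (hΛ : ∀ i (x : H) (y : Hi i), (inner 𝓐 (Λ i x) y : 𝓐) = inner 𝓐 x (Λadj i y))
    -- `{Λ i}` is a `∗`-`K`-`g`-frame with bounds `a`, `b`, where `a` is invertible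
    (a b : 𝓐) (ha : a ≠ 0) (hb : b ≠ 0) (haU : IsUnit a)
    (hsum : ∀ x : H, Summable fun i => (inner 𝓐 (Λ i x) (Λ i x) : 𝓐))
    (hlow : ∀ x : H,
      a * (inner 𝓐 (Kadj x) (Kadj x) : 𝓐) * star a ≤ ∑' i, (inner 𝓐 (Λ i x) (Λ i x) : 𝓐))
    (hup : ∀ x : H, ∑' i, (inner 𝓐 (Λ i x) (Λ i x) : 𝓐) ≤ b * (inner 𝓐 x x : 𝓐) * star b)
    -- the family `Γ i ∈ End*(H, Hi i)` of adjointable operators with convergent sums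
    (Γ : ∀ i, H →L[ℂ] Hi i) (Γadj : ∀ i, Hi i →L[ℂ] H)
    (hΓ : ∀ i (x : H) (y : Hi i), (inner 𝓐 (Γ i x) y : 𝓐) = inner 𝓐 x (Γadj i y))
    (hsumΓ : ∀ x : H, Summable fun i => (inner 𝓐 (Γ i x) (Γ i x) : 𝓐))
    (hsumdiff : ∀ x : H, Summable fun i => (inner 𝓐 (Λ i x - Γ i x) (Λ i x - Γ i x) : 𝓐))
    -- the analysis operator of `{Γ i}` has closed range in `⊕ᵢ Hᵢ`
    (hΓclosed : ∀ x : ∀ i, Hi i, InClosureRange 𝓐 (fun i => ⇑(Γ i)) x →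
      ∃ f : H, x = fun i => Γ i f)
    -- the perturbation condition
    (M : ℝ) (hM : 0 < M)
    (hpert : ∀ f : H, ‖∑' i, (inner 𝓐 (Λ i f - Γ i f) (Λ i f - Γ i f) : 𝓐)‖ ≤
      M * min ‖∑' i, (inner 𝓐 (Λ i f) (Λ i f) : 𝓐)‖ ‖∑' i, (inner 𝓐 (Γ i f) (Γ i f) : 𝓐)‖) :
    ∃ c d : ℝ, 0 < c ∧ 0 < d ∧ ∀ f : H,
      c • (inner 𝓐 (Ladj f) (Ladj f) : 𝓐) ≤ ∑' i, (inner 𝓐 (Γ i f) (Γ i f) : 𝓐) ∧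
      ∑' i, (inner 𝓐 (Γ i f) (Γ i f) : 𝓐) ≤ d • (inner 𝓐 f f : 𝓐) := by
  classical
  obtain ⟨u, rfl⟩ := haU
  set SΛ : H → 𝓐 := fun g => ∑' i, inner 𝓐 (Λ i g) (Λ i g) with hSΛdef
  set SΓ : H → 𝓐 := fun g => ∑' i, inner 𝓐 (Γ i g) (Γ i g) with hSΓdef
  set SD : H → 𝓐 := fun g => ∑' i, inner 𝓐 (Λ i g - Γ i g) (Λ i g - Γ i g) with hSDdef
  have hSΛ0 : ∀ g, (0 : 𝓐) ≤ SΛ g :=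
    fun g => tsum_nonneg fun i => CStarModule.inner_self_nonneg
  have hSΓ0 : ∀ g, (0 : 𝓐) ≤ SΓ g :=
    fun g => tsum_nonneg fun i => CStarModule.inner_self_nonneg
  have hSD0 : ∀ g, (0 : 𝓐) ≤ SD g :=
    fun g => tsum_nonneg fun i => CStarModule.inner_self_nonneg
  -- norm comparison between `SΓ` and `SΛ`
  have hcomp : ∀ g : H, ‖SΓ g‖ ≤ (2 + 2*M) * ‖SΛ g‖ ∧ ‖SΛ g‖ ≤ (2 + 2*M) * ‖SΓ g‖ := by
    intro g
    have hDmin := hpert g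
    have hDΛ : ‖SD g‖ ≤ M * ‖SΛ g‖ :=
      hDmin.trans (mul_le_mul_of_nonneg_left (min_le_left _ _) hM.le)
    have hDΓ : ‖SD g‖ ≤ M * ‖SΓ g‖ :=
      hDmin.trans (mul_le_mul_of_nonneg_left (min_le_right _ _) hM.le)
    constructor
    · have hterm : ∀ i, (inner 𝓐 (Γ i g) (Γ i g) : 𝓐) ≤
          inner 𝓐 (Λ i g) (Λ i g) + inner 𝓐 (Λ i g) (Λ i g)
            + inner 𝓐 (Λ i g - Γ i g) (Λ i g - Γ i g)
            + inner 𝓐 (Λ i g - Γ i g) (Λ i g - Γ i g) := by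
        intro i
        have := inner_le_aux (𝓐 := 𝓐) (Λ i g) (Γ i g)
        rwa [show (Γ i g - Λ i g) = -(Λ i g - Γ i g) by abel, inner_neg_neg'] at this
      have hsum2 : Summable (fun i => (inner 𝓐 (Λ i g) (Λ i g) : 𝓐) + inner 𝓐 (Λ i g) (Λ i g)
          + inner 𝓐 (Λ i g - Γ i g) (Λ i g - Γ i g)
          + inner 𝓐 (Λ i g - Γ i g) (Λ i g - Γ i g)) :=
        (((hsum g).add (hsum g)).add (hsumdiff g)).add (hsumdiff g)
      have hle := Summable.tsum_le_tsum hterm (hsumΓ g) hsum2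
      have heq : (∑' i, ((inner 𝓐 (Λ i g) (Λ i g) : 𝓐) + inner 𝓐 (Λ i g) (Λ i g)
          + inner 𝓐 (Λ i g - Γ i g) (Λ i g - Γ i g)
          + inner 𝓐 (Λ i g - Γ i g) (Λ i g - Γ i g)))
          = SΛ g + SΛ g + SD g + SD g := by
        rw [Summable.tsum_add (((hsum g).add (hsum g)).add (hsumdiff g)) (hsumdiff g),
          Summable.tsum_add ((hsum g).add (hsum g)) (hsumdiff g),
          Summable.tsum_add (hsum g) (hsum g)]
      rw [heq] at hle
      have hn : ‖SΓ g‖ ≤ ‖SΛ g + SΛ g + SD g + SD g‖ :=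
        CStarAlgebra.norm_le_norm_of_nonneg_of_le (hSΓ0 g) hle
      have hn2 : ‖SΛ g + SΛ g + SD g + SD g‖ ≤ ‖SΛ g‖ + ‖SΛ g‖ + ‖SD g‖ + ‖SD g‖ := by
        calc ‖SΛ g + SΛ g + SD g + SD g‖ ≤ ‖SΛ g + SΛ g + SD g‖ + ‖SD g‖ := norm_add_le _ _
          _ ≤ ‖SΛ g + SΛ g‖ + ‖SD g‖ + ‖SD g‖ := by
              have := norm_add_le (SΛ g + SΛ g) (SD g); linarith
          _ ≤ ‖SΛ g‖ + ‖SΛ g‖ + ‖SD g‖ + ‖SD g‖ := by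
              have := norm_add_le (SΛ g) (SΛ g); linarith
      nlinarith [norm_nonneg (SΛ g)]
    · have hterm : ∀ i, (inner 𝓐 (Λ i g) (Λ i g) : 𝓐) ≤
          inner 𝓐 (Γ i g) (Γ i g) + inner 𝓐 (Γ i g) (Γ i g)
            + inner 𝓐 (Λ i g - Γ i g) (Λ i g - Γ i g)
            + inner 𝓐 (Λ i g - Γ i g) (Λ i g - Γ i g) :=
        fun i => inner_le_aux (𝓐 := 𝓐) (Γ i g) (Λ i g)
      have hsum2 : Summable (fun i => (inner 𝓐 (Γ i g) (Γ i g) : 𝓐) + inner 𝓐 (Γ i g) (Γ i g)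
          + inner 𝓐 (Λ i g - Γ i g) (Λ i g - Γ i g)
          + inner 𝓐 (Λ i g - Γ i g) (Λ i g - Γ i g)) :=
        (((hsumΓ g).add (hsumΓ g)).add (hsumdiff g)).add (hsumdiff g)
      have hle := Summable.tsum_le_tsum hterm (hsum g) hsum2
      have heq : (∑' i, ((inner 𝓐 (Γ i g) (Γ i g) : 𝓐) + inner 𝓐 (Γ i g) (Γ i g)
          + inner 𝓐 (Λ i g - Γ i g) (Λ i g - Γ i g)
          + inner 𝓐 (Λ i g - Γ i g) (Λ i g - Γ i g)))
          = SΓ g + SΓ g + SD g + SD g := by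
        rw [Summable.tsum_add (((hsumΓ g).add (hsumΓ g)).add (hsumdiff g)) (hsumdiff g),
          Summable.tsum_add ((hsumΓ g).add (hsumΓ g)) (hsumdiff g),
          Summable.tsum_add (hsumΓ g) (hsumΓ g)]
      rw [heq] at hle
      have hn : ‖SΛ g‖ ≤ ‖SΓ g + SΓ g + SD g + SD g‖ :=
        CStarAlgebra.norm_le_norm_of_nonneg_of_le (hSΛ0 g) hle
      have hn2 : ‖SΓ g + SΓ g + SD g + SD g‖ ≤ ‖SΓ g‖ + ‖SΓ g‖ + ‖SD g‖ + ‖SD g‖ := by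
        calc ‖SΓ g + SΓ g + SD g + SD g‖ ≤ ‖SΓ g + SΓ g + SD g‖ + ‖SD g‖ := norm_add_le _ _
          _ ≤ ‖SΓ g + SΓ g‖ + ‖SD g‖ + ‖SD g‖ := by
              have := norm_add_le (SΓ g + SΓ g) (SD g); linarith
          _ ≤ ‖SΓ g‖ + ‖SΓ g‖ + ‖SD g‖ + ‖SD g‖ := by
              have := norm_add_le (SΓ g) (SΓ g); linarith
      nlinarith [norm_nonneg (SΓ g)]
  -- upper scalar bound
  have hbpos : (0:ℝ) < ‖b‖ := norm_pos_iff.mpr hb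
  have hup_sc : ∀ g : H, ‖SΓ g‖ ≤ ((2 + 2*M) * ‖b‖^2) * ‖(inner 𝓐 g g : 𝓐)‖ := by
    intro g
    have h1 : ‖SΛ g‖ ≤ ‖b * (inner 𝓐 g g : 𝓐) * star b‖ :=
      CStarAlgebra.norm_le_norm_of_nonneg_of_le (hSΛ0 g) (hup g)
    have h2 : ‖b * (inner 𝓐 g g : 𝓐) * star b‖ ≤ ‖b‖ * ‖(inner 𝓐 g g : 𝓐)‖ * ‖b‖ := by
      calc ‖b * (inner 𝓐 g g : 𝓐) * star b‖ ≤ ‖b * (inner 𝓐 g g : 𝓐)‖ * ‖star b‖ :=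
            norm_mul_le _ _
        _ ≤ ‖b‖ * ‖(inner 𝓐 g g : 𝓐)‖ * ‖b‖ := by
            rw [norm_star]
            exact mul_le_mul_of_nonneg_right (norm_mul_le _ _) (norm_nonneg _)
    have h3 := (hcomp g).1
    nlinarith [norm_nonneg (SΛ g), norm_nonneg (inner 𝓐 g g : 𝓐)]
  -- smul compatibility of the frame sums
  have hSΓ_smul : ∀ (f : H) (c : 𝓐), SΓ (star c • f) = star c * SΓ f * c := by
    intro f c
    have h1 : ∀ i, Γ i (star c • f) = star c • (Γ i f) :=
      fun i => adjointable_op_smul_s8 (Γ i) (Γadj i) (hΓ i) f (star c)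
    have h2 : ∀ i, (inner 𝓐 (Γ i (star c • f)) (Γ i (star c • f)) : 𝓐)
        = star c * ((inner 𝓐 (Γ i f) (Γ i f) : 𝓐) * c) := by
      intro i
      rw [h1 i, CStarModule.inner_op_smul_left, CStarModule.inner_op_smul_right, star_star, mul_assoc]
    calc SΓ (star c • f) = ∑' i, star c * ((inner 𝓐 (Γ i f) (Γ i f) : 𝓐) * c) := tsum_congr h2
      _ = star c * ∑' i, ((inner 𝓐 (Γ i f) (Γ i f) : 𝓐) * c) :=
          Summable.tsum_mul_left _ ((hsumΓ f).mul_right c)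
      _ = star c * ((∑' i, (inner 𝓐 (Γ i f) (Γ i f) : 𝓐)) * c) := by
          rw [Summable.tsum_mul_right c (hsumΓ f)]
      _ = star c * SΓ f * c := by rw [mul_assoc]
  have hinner_smul : ∀ (f : H) (c : 𝓐),
      (inner 𝓐 (star c • f) (star c • f) : 𝓐) = star c * (inner 𝓐 f f : 𝓐) * c := by
    intro f c
    rw [CStarModule.inner_op_smul_left, CStarModule.inner_op_smul_right, star_star]
  -- the upper operator bound
  set d : ℝ := (2 + 2*M) * ‖b‖^2 with hddef
  have hdpos : 0 < d := by positivity
  have hupper : ∀ f : H, SΓ f ≤ d • (inner 𝓐 f f : 𝓐) := by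
    intro f
    refine aux_loc (hSΓ0 f) CStarModule.inner_self_nonneg hdpos.le ?_
    intro c
    rw [← hSΓ_smul f c, show star c * (inner 𝓐 f f : 𝓐) * c = inner 𝓐 (star c • f) (star c • f) from
      (hinner_smul f c).symm]
    exact hup_sc (star c • f)
  -- open mapping theorem for K
  set V : Submodule ℂ H := LinearMap.range (K : H →ₗ[ℂ] H) with hVdef
  have hVc : IsClosed (V : Set H) := by
    rw [hVdef]
    rw [LinearMap.coe_range]
    exact hKclosed
  haveI : CompleteSpace V := hVc.completeSpace_coe
  set K' : H →L[ℂ] V := K.codRestrict V (fun x => LinearMap.mem_range_self (K : H →ₗ[ℂ] H) x) with hK'def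
  have hsurj : Function.Surjective K' := by
    rintro ⟨y, hy⟩
    obtain ⟨x, hx⟩ := hy
    exact ⟨x, Subtype.ext hx⟩
  obtain ⟨CK, hCK0, hCK⟩ := K'.exists_preimage_norm_le hsurj
  -- comparing Ladj and Kadj
  have hLK : ∀ g : H, ‖(inner 𝓐 (Ladj g) (Ladj g) : 𝓐)‖ ≤
      (CK * ‖L‖)^2 * ‖(inner 𝓐 (Kadj g) (Kadj g) : 𝓐)‖ := by
    intro g
    obtain ⟨x, hx⟩ : ∃ x, K x = L (Ladj g) := hrange (Set.mem_range_self _)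
    obtain ⟨w, hw1, hw2⟩ := hCK ⟨L (Ladj g), ⟨x, hx⟩⟩
    have hKw : K w = L (Ladj g) := congrArg Subtype.val hw1
    have hnw : ‖w‖ ≤ CK * ‖L (Ladj g)‖ := hw2
    have h1 : (inner 𝓐 (Ladj g) (Ladj g) : 𝓐) = inner 𝓐 w (Kadj g) := by
      calc (inner 𝓐 (Ladj g) (Ladj g) : 𝓐) = inner 𝓐 (L (Ladj g)) g := (hL (Ladj g) g).symm
        _ = inner 𝓐 (K w) g := by rw [hKw]
        _ = inner 𝓐 w (Kadj g) := hK w g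
    have h2 : ‖(inner 𝓐 (Ladj g) (Ladj g) : 𝓐)‖ ≤ (CK * ‖L‖ * ‖Ladj g‖) * ‖Kadj g‖ := by
      rw [h1]
      refine (CStarModule.norm_inner_le H).trans ?_
      have hw' : ‖w‖ ≤ CK * ‖L‖ * ‖Ladj g‖ := by
        refine hnw.trans ?_
        have := L.le_opNorm (Ladj g)
        nlinarith
      exact mul_le_mul_of_nonneg_right hw' (norm_nonneg _)
    have hsqL : ‖(inner 𝓐 (Ladj g) (Ladj g) : 𝓐)‖ = ‖Ladj g‖^2 :=
      (CStarModule.norm_sq_eq (A := 𝓐) (x := Ladj g)).symm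
    have hsqK : ‖(inner 𝓐 (Kadj g) (Kadj g) : 𝓐)‖ = ‖Kadj g‖^2 :=
      (CStarModule.norm_sq_eq (A := 𝓐) (x := Kadj g)).symm
    rw [hsqL, hsqK]
    rw [hsqL] at h2
    rcases eq_or_lt_of_le (norm_nonneg (Ladj g)) with h | h
    · rw [← h]
      have h0 : (0:ℝ)^2 = 0 := by norm_num
      rw [h0]
      positivity
    · have h3 : ‖Ladj g‖ ≤ CK * ‖L‖ * ‖Kadj g‖ := by nlinarith
      nlinarith [norm_nonneg (Kadj g), norm_nonneg (Ladj g), mul_pos hCK0 (h.trans_le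
        (by nlinarith [norm_nonneg (Kadj g)] : ‖Ladj g‖ ≤ CK * ‖L‖ * ‖Kadj g‖))]
  -- comparing Kadj with SΛ via the lower frame bound
  have hKa : ∀ g : H, ‖(inner 𝓐 (Kadj g) (Kadj g) : 𝓐)‖ ≤
      ‖((u⁻¹ : 𝓐ˣ) : 𝓐)‖^2 * ‖SΛ g‖ := by
    intro g
    set x : 𝓐 := inner 𝓐 (Kadj g) (Kadj g) with hxdef
    have hrec : x = (↑u⁻¹ : 𝓐) * ((↑u : 𝓐) * x * star (↑u : 𝓐)) * star (↑u⁻¹ : 𝓐) := by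
      have e1 : (↑u⁻¹ : 𝓐) * ((↑u : 𝓐) * x * star (↑u : 𝓐)) * star (↑u⁻¹ : 𝓐)
          = ((↑u⁻¹ : 𝓐) * (↑u : 𝓐)) * x * (star (↑u : 𝓐) * star (↑u⁻¹ : 𝓐)) := by
        noncomm_ring
      rw [e1, ← star_mul, Units.inv_mul, star_one, one_mul, mul_one]
    have hY0 : (0:𝓐) ≤ (↑u : 𝓐) * x * star (↑u : 𝓐) :=
      star_right_conjugate_nonneg CStarModule.inner_self_nonneg _
    have hYle : ‖(↑u : 𝓐) * x * star (↑u : 𝓐)‖ ≤ ‖SΛ g‖ :=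
      CStarAlgebra.norm_le_norm_of_nonneg_of_le hY0 (hlow g)
    calc ‖x‖ = ‖(↑u⁻¹ : 𝓐) * ((↑u : 𝓐) * x * star (↑u : 𝓐)) * star (↑u⁻¹ : 𝓐)‖ := by
          rw [← hrec]
      _ ≤ ‖(↑u⁻¹ : 𝓐) * ((↑u : 𝓐) * x * star (↑u : 𝓐))‖ * ‖star (↑u⁻¹ : 𝓐)‖ :=
          norm_mul_le _ _
      _ ≤ (‖(↑u⁻¹ : 𝓐)‖ * ‖(↑u : 𝓐) * x * star (↑u : 𝓐)‖) * ‖star (↑u⁻¹ : 𝓐)‖ :=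
          mul_le_mul_of_nonneg_right (norm_mul_le _ _) (norm_nonneg _)
      _ = ‖((u⁻¹ : 𝓐ˣ) : 𝓐)‖^2 * ‖(↑u : 𝓐) * x * star (↑u : 𝓐)‖ := by
          rw [norm_star]; ring
      _ ≤ ‖((u⁻¹ : 𝓐ˣ) : 𝓐)‖^2 * ‖SΛ g‖ := by
          exact mul_le_mul_of_nonneg_left hYle (by positivity)
  -- lower scalar bound
  set c0 : ℝ := (CK * ‖L‖)^2 * (‖((u⁻¹ : 𝓐ˣ) : 𝓐)‖^2 * (2 + 2*M)) + 1 with hc0def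
  have hc0pos : 0 < c0 := by positivity
  have hlow_sc : ∀ g : H, ‖(inner 𝓐 (Ladj g) (Ladj g) : 𝓐)‖ ≤ c0 * ‖SΓ g‖ := by
    intro g
    have h1 := hLK g
    have h2 := hKa g
    have h3 := (hcomp g).2
    have h4 : (0:ℝ) ≤ ‖SΓ g‖ := norm_nonneg _
    have h5 : (0:ℝ) ≤ (CK * ‖L‖)^2 := sq_nonneg _
    have h6 : (0:ℝ) ≤ ‖((u⁻¹ : 𝓐ˣ) : 𝓐)‖^2 := sq_nonneg _
    calc ‖(inner 𝓐 (Ladj g) (Ladj g) : 𝓐)‖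
        ≤ (CK * ‖L‖)^2 * (‖((u⁻¹ : 𝓐ˣ) : 𝓐)‖^2 * ‖SΛ g‖) :=
          h1.trans (mul_le_mul_of_nonneg_left h2 h5)
      _ ≤ (CK * ‖L‖)^2 * (‖((u⁻¹ : 𝓐ˣ) : 𝓐)‖^2 * ((2 + 2*M) * ‖SΓ g‖)) :=
          mul_le_mul_of_nonneg_left (mul_le_mul_of_nonneg_left h3 h6) h5
      _ = ((CK * ‖L‖)^2 * (‖((u⁻¹ : 𝓐ˣ) : 𝓐)‖^2 * (2 + 2*M))) * ‖SΓ g‖ := by ring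
      _ ≤ c0 * ‖SΓ g‖ := by
          rw [hc0def]
          nlinarith [h4]
  -- the lower operator bound
  have hL' : ∀ x y : H, (inner 𝓐 (Ladj x) y : 𝓐) = inner 𝓐 x (L y) := fun x y => by
    rw [← CStarModule.star_inner, ← hL y x, CStarModule.star_inner]
  have hlower : ∀ f : H, (inner 𝓐 (Ladj f) (Ladj f) : 𝓐) ≤ c0 • SΓ f := by
    intro f
    refine aux_loc CStarModule.inner_self_nonneg (hSΓ0 f) hc0pos.le ?_
    intro c
    have hsmul : Ladj (star c • f) = star c • (Ladj f) := adjointable_op_smul_s8 Ladj L hL' f (star c)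
    have e1 : (inner 𝓐 (Ladj (star c • f)) (Ladj (star c • f)) : 𝓐)
        = star c * (inner 𝓐 (Ladj f) (Ladj f) : 𝓐) * c := by
      rw [hsmul, CStarModule.inner_op_smul_left, CStarModule.inner_op_smul_right, star_star]
    rw [← e1, ← hSΓ_smul f c]
    exact hlow_sc (star c • f)
  refine ⟨c0⁻¹, d, inv_pos.mpr hc0pos, hdpos, fun f => ⟨?_, hupper f⟩⟩
  have h := hlower f
  have hfinal : (0:𝓐) ≤ SΓ f - c0⁻¹ • (inner 𝓐 (Ladj f) (Ladj f) : 𝓐) := by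
    have h2 : (0:𝓐) ≤ c0 • SΓ f - (inner 𝓐 (Ladj f) (Ladj f) : 𝓐) := sub_nonneg.mpr h
    have h3 := real_smul_nonneg h2 (le_of_lt (inv_pos.mpr hc0pos))
    rwa [smul_sub, smul_smul, inv_mul_cancel₀ hc0pos.ne', one_smul] at h3
  exact sub_nonneg.mp hfinal
end

section
/- Let K, L ∈ End*_𝒜(H) where K is a co-isometry (KK* = id_H), Range(K) ⊆ Range(L), and Range(L) is closed. Let {Λᵢ}_{i∈I} be a ∗-K-g-frame for H with bounds A, B ∈ 𝒜 where A is invertible, and let {Γᵢ}_{i∈I} be a ∗-L-g-frame for H with bounds C, D ∈ 𝒜 where C is invertible. Then there exists a constant M > 0 such that for all f ∈ H: ‖∑_{i∈I}⟨(Λᵢ−Γᵢ)f, (Λᵢ−Γᵢ)f⟩‖ ≤ M·min(‖∑_{i∈I}⟨Λᵢf, Λᵢf⟩‖, ‖∑_{i∈I}⟨Γᵢf, Γᵢf⟩‖). -/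
open scoped RightActions

/-- The December 2024 Mathlib notion of a Hilbert C⋆-module (right `A`-action, inner product
`A`-linear in the second argument), kept with its old meaning. -/
class RightCStarModule (A E : Type*) [NonUnitalSemiring A] [StarRing A]
    [Module ℂ A] [AddCommGroup E] [Module ℂ E] [PartialOrder A] [SMul Aᵐᵒᵖ E] [Norm A] [Norm E]
    extends Inner A E where
  inner_add_right {x} {y} {z} : inner x (y + z) = inner x y + inner x z
  inner_self_nonneg {x} : 0 ≤ inner x x
  inner_self {x} : inner x x = 0 ↔ x = 0
  inner_op_smul_right {a : A} {x y : E} : inner x (y <• a) = inner x y * a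
  inner_smul_right_complex {z : ℂ} {x} {y} : inner x (z • y) = z • inner x y
  star_inner x y : star (inner x y) = inner y x
  norm_eq_sqrt_norm_inner_self x : ‖x‖ = √‖inner x x‖

namespace RightCStarModule

variable {A E : Type*} [CStarAlgebra A] [PartialOrder A] [StarOrderedRing A]
  [NormedAddCommGroup E] [NormedSpace ℂ E] [SMul Aᵐᵒᵖ E] [RightCStarModule A E]

lemma inner_add_left {x y z : E} : inner A (x + y) z = inner A x z + inner A y z := by
  rw [← RightCStarModule.star_inner (A := A) z (x + y), RightCStarModule.inner_add_right, star_add,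
    RightCStarModule.star_inner, RightCStarModule.star_inner]

lemma inner_sub_right {x y z : E} : inner A x (y - z) = inner A x y - inner A x z :=
  map_sub (AddMonoidHom.mk' (fun y => inner A x y) (fun _ _ => RightCStarModule.inner_add_right)) y z

lemma inner_sub_left {x y z : E} : inner A (x - y) z = inner A x z - inner A y z :=
  map_sub (AddMonoidHom.mk' (fun x => inner A x z)
    (fun _ _ => RightCStarModule.inner_add_left)) x y

lemma inner_zero_right {x : E} : inner A x (0 : E) = 0 :=
  map_zero (AddMonoidHom.mk' (fun y => inner A x y) (fun _ _ => RightCStarModule.inner_add_right))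

lemma inner_zero_left {x : E} : inner A (0 : E) x = 0 :=
  map_zero (AddMonoidHom.mk' (fun y => inner A y x) (fun _ _ => RightCStarModule.inner_add_left))

lemma inner_op_smul_left {a : A} {x y : E} : inner A (x <• a) y = star a * inner A x y := by
  rw [← RightCStarModule.star_inner (A := A) y (x <• a), RightCStarModule.inner_op_smul_right,
    star_mul, RightCStarModule.star_inner]

lemma inner_smul_right_real {r : ℝ} {x y : E} : inner A x (r • y) = r • inner A x y := by
  rw [← Complex.coe_smul, RightCStarModule.inner_smul_right_complex, Complex.coe_smul]

lemma inner_smul_left_real {r : ℝ} {x y : E} : inner A (r • x) y = r • inner A x y := by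
  rw [← Complex.coe_smul, ← RightCStarModule.star_inner (A := A) y, RightCStarModule.inner_smul_right_complex,
    star_smul, RightCStarModule.star_inner, Complex.star_def, Complex.conj_ofReal, Complex.coe_smul]

lemma norm_sq_eq {x : E} : ‖x‖ ^ 2 = ‖inner A x x‖ := by
  rw [RightCStarModule.norm_eq_sqrt_norm_inner_self (A := A) x, Real.sq_sqrt (norm_nonneg _)]

lemma inner_mul_inner_swap_le {x y : E} : inner A y x * inner A x y ≤ ‖x‖ ^ 2 • inner A y y := by
  rcases eq_or_ne x 0 with h | h
  · subst h
    simp [RightCStarModule.inner_zero_left, RightCStarModule.inner_zero_right]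
  · set r : ℝ := ‖x‖ ^ 2 with hr
    have hyx : inner A y x = star (inner A x y) := by rw [RightCStarModule.star_inner]
    have hrpos : 0 < r := pow_pos (norm_pos_iff.mpr h) 2
    have e : inner A (x <• inner A x y - r • y) (x <• inner A x y - r • y) =
        star (inner A x y) * inner A x x * inner A x y - r • (star (inner A x y) * inner A x y)
          - r • (star (inner A x y) * inner A x y) + r • r • inner A y y := by
      simp only [RightCStarModule.inner_sub_left, RightCStarModule.inner_sub_right,
        RightCStarModule.inner_op_smul_left, RightCStarModule.inner_op_smul_right,
        RightCStarModule.inner_smul_left_real, RightCStarModule.inner_smul_right_real, hyx,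
        mul_sub, sub_mul, smul_sub, mul_smul_comm, smul_mul_assoc, mul_assoc]
      abel
    have hb : star (inner A x y) * inner A x x * inner A x y ≤
        r • (star (inner A x y) * inner A x y) := by
      have := CStarAlgebra.star_left_conjugate_le_norm_smul (a := inner A x y) (b := inner A x x)
        (RightCStarModule.star_inner x x)
      rwa [← RightCStarModule.norm_sq_eq] at this
    have h0 : (0 : A) ≤ r • r • inner A y y - r • (star (inner A x y) * inner A x y) := by
      have h1 : (0 : A) ≤ star (inner A x y) * inner A x x * inner A x y
          - r • (star (inner A x y) * inner A x y) - r • (star (inner A x y) * inner A x y)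
          + r • r • inner A y y := by
        rw [← e]; exact RightCStarModule.inner_self_nonneg
      have h2 : star (inner A x y) * inner A x x * inner A x y
          - r • (star (inner A x y) * inner A x y) - r • (star (inner A x y) * inner A x y)
          + r • r • inner A y y ≤ r • r • inner A y y - r • (star (inner A x y) * inner A x y) := by
        have : r • (star (inner A x y) * inner A x y) - r • (star (inner A x y) * inner A x y)
            - r • (star (inner A x y) * inner A x y) + r • r • inner A y y
            = r • r • inner A y y - r • (star (inner A x y) * inner A x y) := by abel
        rw [← this]; gcongr
      exact h1.trans h2
    rw [sub_nonneg, ← hyx] at h0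
    exact (smul_le_smul_iff_of_pos_left hrpos).mp h0

variable (E) in
lemma norm_inner_le {x y : E} : ‖inner A x y‖ ≤ ‖x‖ * ‖y‖ := by
  have h1 : ‖inner A x y‖ ^ 2 ≤ (‖x‖ * ‖y‖) ^ 2 := by
    calc ‖inner A x y‖ ^ 2 = ‖inner A y x * inner A x y‖ := by
          rw [← RightCStarModule.star_inner (A := A) x y, CStarRing.norm_star_mul_self, pow_two]
      _ ≤ ‖‖x‖ ^ 2 • inner A y y‖ := by
          refine CStarAlgebra.norm_le_norm_of_nonneg_of_le ?_
            RightCStarModule.inner_mul_inner_swap_le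
          rw [← RightCStarModule.star_inner (A := A) x y]
          exact star_mul_self_nonneg _
      _ = ‖x‖ ^ 2 * ‖y‖ ^ 2 := by
          rw [norm_smul, norm_pow, norm_norm, ← RightCStarModule.norm_sq_eq (A := A) (x := y)]
      _ = (‖x‖ * ‖y‖) ^ 2 := by ring
  exact (pow_le_pow_iff_left₀ (norm_nonneg _) (by positivity) (by norm_num)).mp h1

end RightCStarModule

/-- Parallelogram-type inequality in a C*-module. -/
lemma cstar_par_ineq {𝓐 : Type*} [CStarAlgebra 𝓐] [PartialOrder 𝓐] [StarOrderedRing 𝓐]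
    {E : Type*} [NormedAddCommGroup E] [NormedSpace ℂ E] [SMul 𝓐ᵐᵒᵖ E] [RightCStarModule 𝓐 E]
    (x y : E) :
    (inner 𝓐 (x - y) (x - y) : 𝓐) ≤
      (inner 𝓐 x x + inner 𝓐 x x) + ((inner 𝓐 y y : 𝓐) + inner 𝓐 y y) := by
  rw [← sub_nonneg]
  have h : ((inner 𝓐 x x + inner 𝓐 x x) + ((inner 𝓐 y y : 𝓐) + inner 𝓐 y y))
      - (inner 𝓐 (x - y) (x - y) : 𝓐) = (inner 𝓐 (x + y) (x + y) : 𝓐) := by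
    simp only [RightCStarModule.inner_sub_left, RightCStarModule.inner_sub_right,
      RightCStarModule.inner_add_left, RightCStarModule.inner_add_right]
    abel
  rw [h]
  exact RightCStarModule.inner_self_nonneg

/-- Norm bound from conjugation by a unit. -/
lemma cstar_conj_norm_bound {𝓐 : Type*} [CStarAlgebra 𝓐] [PartialOrder 𝓐] [StarOrderedRing 𝓐]
    (u : 𝓐ˣ) (e S : 𝓐) (he : 0 ≤ e) (hle : (u : 𝓐) * e * star (u : 𝓐) ≤ S) :
    ‖e‖ ≤ ‖((u⁻¹ : 𝓐ˣ) : 𝓐)‖ ^ 2 * ‖S‖ := by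
  have he' : e = ((u⁻¹ : 𝓐ˣ) : 𝓐) * ((u : 𝓐) * e * star (u : 𝓐)) * star ((u⁻¹ : 𝓐ˣ) : 𝓐) := by
    have h1 : ((u⁻¹ : 𝓐ˣ) : 𝓐) * (u : 𝓐) = 1 := u.inv_mul
    have h2 : star ((u : 𝓐)) * star ((u⁻¹ : 𝓐ˣ) : 𝓐) = 1 := by
      rw [← star_mul, h1, star_one]
    calc e = (((u⁻¹ : 𝓐ˣ) : 𝓐) * (u : 𝓐)) * e * (star ((u : 𝓐)) * star ((u⁻¹ : 𝓐ˣ) : 𝓐)) := by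
            rw [h1, h2]; simp
      _ = ((u⁻¹ : 𝓐ˣ) : 𝓐) * ((u : 𝓐) * e * star (u : 𝓐)) * star ((u⁻¹ : 𝓐ˣ) : 𝓐) := by
            noncomm_ring
  have hconj : 0 ≤ (u : 𝓐) * e * star (u : 𝓐) := star_right_conjugate_nonneg he _
  have hnorm : ‖(u : 𝓐) * e * star (u : 𝓐)‖ ≤ ‖S‖ :=
    CStarAlgebra.norm_le_norm_of_nonneg_of_le hconj hle
  calc ‖e‖ = ‖((u⁻¹ : 𝓐ˣ) : 𝓐) * ((u : 𝓐) * e * star (u : 𝓐)) * star ((u⁻¹ : 𝓐ˣ) : 𝓐)‖ := by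
        rw [← he']
    _ ≤ ‖((u⁻¹ : 𝓐ˣ) : 𝓐)‖ * ‖(u : 𝓐) * e * star (u : 𝓐)‖ * ‖star ((u⁻¹ : 𝓐ˣ) : 𝓐)‖ := by
        exact (norm_mul_le _ _).trans (by gcongr; exact norm_mul_le _ _)
    _ = ‖((u⁻¹ : 𝓐ˣ) : 𝓐)‖ ^ 2 * ‖(u : 𝓐) * e * star (u : 𝓐)‖ := by
        rw [norm_star]; ring
    _ ≤ ‖((u⁻¹ : 𝓐ˣ) : 𝓐)‖ ^ 2 * ‖S‖ := by
        have h3 : (0:ℝ) ≤ ‖((u⁻¹ : 𝓐ˣ) : 𝓐)‖ ^ 2 := sq_nonneg _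
        nlinarith

/-- Let `K` be a co-isometry (`K K* = id`), `Range(K) ⊆ Range(L)` with
`Range(L)` closed, `{Λ i}` a `∗`-`K`-`g`-frame with bounds `a, b` (`a` invertible), and
`{Γ i}` a `∗`-`L`-`g`-frame with bounds `c, d` (`c` invertible). Then there is `M > 0` with
`‖∑ᵢ ⟪(Λᵢ−Γᵢ)f,(Λᵢ−Γᵢ)f⟫‖ ≤ M·min(‖∑ᵢ ⟪Λᵢf,Λᵢf⟫‖, ‖∑ᵢ ⟪Γᵢf,Γᵢf⟫‖)` for all `f`. -/
theorem star_K_g_frame_perturbation_converse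
    {𝓐 : Type*} [CStarAlgebra 𝓐] [PartialOrder 𝓐] [StarOrderedRing 𝓐]
    {I : Type*} [Countable I]
    {H : Type*} [NormedAddCommGroup H] [NormedSpace ℂ H] [SMul 𝓐ᵐᵒᵖ H]
    [RightCStarModule 𝓐 H] [CompleteSpace H]
    {Hi : I → Type*} [∀ i, NormedAddCommGroup (Hi i)] [∀ i, NormedSpace ℂ (Hi i)]
    [∀ i, SMul 𝓐ᵐᵒᵖ (Hi i)] [∀ i, RightCStarModule 𝓐 (Hi i)] [∀ i, CompleteSpace (Hi i)]
    -- `K` and `L` are adjointable operators on `H` with adjoints `Kadj`, `Ladj`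
    (K Kadj L Ladj : H →L[ℂ] H)
    (hK : ∀ x y : H, (inner 𝓐 (K x) y : 𝓐) = inner 𝓐 x (Kadj y))
    (hL : ∀ x y : H, (inner 𝓐 (L x) y : 𝓐) = inner 𝓐 x (Ladj y))
    -- `K` is a co-isometry, `Range(K) ⊆ Range(L)`, and `Range(L)` is closed
    (hKco : K.comp Kadj = ContinuousLinearMap.id ℂ H)
    (hrange : Set.range K ⊆ Set.range L)
    (hLclosed : IsClosed (Set.range L))
    -- the family `Λ i ∈ End*(H, Hi i)`: a `∗`-`K`-`g`-frame with bounds `a`, `b`,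
    -- where `a` is invertible
    (Λ : ∀ i, H →L[ℂ] Hi i) (Λadj : ∀ i, Hi i →L[ℂ] H)
    (hΛ : ∀ i (x : H) (y : Hi i), (inner 𝓐 (Λ i x) y : 𝓐) = inner 𝓐 x (Λadj i y))
    (a b : 𝓐) (ha : a ≠ 0) (hb : b ≠ 0) (haU : IsUnit a)
    (hsum : ∀ x : H, Summable fun i => (inner 𝓐 (Λ i x) (Λ i x) : 𝓐))
    (hlow : ∀ x : H,
      a * (inner 𝓐 (Kadj x) (Kadj x) : 𝓐) * star a ≤ ∑' i, (inner 𝓐 (Λ i x) (Λ i x) : 𝓐))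
    (hup : ∀ x : H, ∑' i, (inner 𝓐 (Λ i x) (Λ i x) : 𝓐) ≤ b * (inner 𝓐 x x : 𝓐) * star b)
    -- the family `Γ i ∈ End*(H, Hi i)`: a `∗`-`L`-`g`-frame with bounds `c`, `d`,
    -- where `c` is invertible
    (Γ : ∀ i, H →L[ℂ] Hi i) (Γadj : ∀ i, Hi i →L[ℂ] H)
    (hΓ : ∀ i (x : H) (y : Hi i), (inner 𝓐 (Γ i x) y : 𝓐) = inner 𝓐 x (Γadj i y))
    (c d : 𝓐) (hc : c ≠ 0) (hd : d ≠ 0) (hcU : IsUnit c)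
    (hsumΓ : ∀ x : H, Summable fun i => (inner 𝓐 (Γ i x) (Γ i x) : 𝓐))
    (hlowΓ : ∀ x : H,
      c * (inner 𝓐 (Ladj x) (Ladj x) : 𝓐) * star c ≤ ∑' i, (inner 𝓐 (Γ i x) (Γ i x) : 𝓐))
    (hupΓ : ∀ x : H, ∑' i, (inner 𝓐 (Γ i x) (Γ i x) : 𝓐) ≤ d * (inner 𝓐 x x : 𝓐) * star d) :
    ∃ M : ℝ, 0 < M ∧ ∀ f : H,
      (Summable fun i => (inner 𝓐 (Λ i f - Γ i f) (Λ i f - Γ i f) : 𝓐)) ∧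
      ‖∑' i, (inner 𝓐 (Λ i f - Γ i f) (Λ i f - Γ i f) : 𝓐)‖ ≤
        M * min ‖∑' i, (inner 𝓐 (Λ i f) (Λ i f) : 𝓐)‖ ‖∑' i, (inner 𝓐 (Γ i f) (Γ i f) : 𝓐)‖ := by
  classical
  obtain ⟨u, hu⟩ := haU
  obtain ⟨v, hv⟩ := hcU
  subst hu; subst hv
  -- K is surjective via co-isometry, hence L is surjective
  have hKid : ∀ f : H, K (Kadj f) = f := fun f => by
    have := ContinuousLinearMap.ext_iff.mp hKco f
    simpa using this
  have hLsurj : Function.Surjective L := fun f => hrange ⟨Kadj f, hKid f⟩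
  obtain ⟨δ, hδpos, hLpre⟩ := L.exists_preimage_norm_le hLsurj
  -- ⟪K* f, K* f⟫ = ⟪f, f⟫
  have hKinner : ∀ f : H, (inner 𝓐 (Kadj f) (Kadj f) : 𝓐) = inner 𝓐 f f := fun f => by
    have h := hK (Kadj f) f
    rw [hKid f] at h
    exact h.symm
  -- lower-bound norm estimates
  have hΛlow : ∀ f : H, ‖(inner 𝓐 f f : 𝓐)‖ ≤
      ‖((u⁻¹ : 𝓐ˣ) : 𝓐)‖ ^ 2 * ‖∑' i, (inner 𝓐 (Λ i f) (Λ i f) : 𝓐)‖ := fun f =>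
    cstar_conj_norm_bound u _ _ RightCStarModule.inner_self_nonneg
      (by rw [← hKinner f]; exact hlow f)
  have hΓlow : ∀ f : H, ‖(inner 𝓐 (Ladj f) (Ladj f) : 𝓐)‖ ≤
      ‖((v⁻¹ : 𝓐ˣ) : 𝓐)‖ ^ 2 * ‖∑' i, (inner 𝓐 (Γ i f) (Γ i f) : 𝓐)‖ := fun f =>
    cstar_conj_norm_bound v _ _ RightCStarModule.inner_self_nonneg (hlowΓ f)
  -- ‖f‖ ≤ δ * ‖L* f‖
  have hLbelow : ∀ f : H, ‖f‖ ≤ δ * ‖Ladj f‖ := by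
    intro f
    obtain ⟨g, hgf, hgn⟩ := hLpre f
    have h1 : ‖(inner 𝓐 f f : 𝓐)‖ ≤ ‖g‖ * ‖Ladj f‖ := by
      have : (inner 𝓐 f f : 𝓐) = inner 𝓐 g (Ladj f) := by rw [← hL g f, hgf]
      rw [this]
      exact RightCStarModule.norm_inner_le H
    have h2 : ‖f‖ ^ 2 ≤ δ * ‖f‖ * ‖Ladj f‖ := by
      rw [RightCStarModule.norm_sq_eq (A := 𝓐)]
      calc ‖(inner 𝓐 f f : 𝓐)‖ ≤ ‖g‖ * ‖Ladj f‖ := h1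
        _ ≤ (δ * ‖f‖) * ‖Ladj f‖ := by gcongr
        _ = δ * ‖f‖ * ‖Ladj f‖ := by ring
    rcases eq_or_ne f 0 with rfl | hf
    · simpa using by positivity
    · have hfpos : 0 < ‖f‖ := norm_pos_iff.mpr hf
      nlinarith
  -- upper-bound norm estimates
  have hΛup : ∀ f : H, ‖∑' i, (inner 𝓐 (Λ i f) (Λ i f) : 𝓐)‖ ≤ ‖b‖ ^ 2 * ‖(inner 𝓐 f f : 𝓐)‖ := by
    intro f
    have h0 : (0:𝓐) ≤ ∑' i, (inner 𝓐 (Λ i f) (Λ i f) : 𝓐) :=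
      tsum_nonneg fun i => RightCStarModule.inner_self_nonneg
    calc ‖∑' i, (inner 𝓐 (Λ i f) (Λ i f) : 𝓐)‖ ≤ ‖b * (inner 𝓐 f f : 𝓐) * star b‖ :=
          CStarAlgebra.norm_le_norm_of_nonneg_of_le h0 (hup f)
      _ ≤ ‖b‖ * ‖(inner 𝓐 f f : 𝓐)‖ * ‖star b‖ :=
          (norm_mul_le _ _).trans (by gcongr; exact norm_mul_le _ _)
      _ = ‖b‖ ^ 2 * ‖(inner 𝓐 f f : 𝓐)‖ := by rw [norm_star]; ring
  have hΓup : ∀ f : H, ‖∑' i, (inner 𝓐 (Γ i f) (Γ i f) : 𝓐)‖ ≤ ‖d‖ ^ 2 * ‖(inner 𝓐 f f : 𝓐)‖ := by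
    intro f
    have h0 : (0:𝓐) ≤ ∑' i, (inner 𝓐 (Γ i f) (Γ i f) : 𝓐) :=
      tsum_nonneg fun i => RightCStarModule.inner_self_nonneg
    calc ‖∑' i, (inner 𝓐 (Γ i f) (Γ i f) : 𝓐)‖ ≤ ‖d * (inner 𝓐 f f : 𝓐) * star d‖ :=
          CStarAlgebra.norm_le_norm_of_nonneg_of_le h0 (hupΓ f)
      _ ≤ ‖d‖ * ‖(inner 𝓐 f f : 𝓐)‖ * ‖star d‖ :=
          (norm_mul_le _ _).trans (by gcongr; exact norm_mul_le _ _)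
      _ = ‖d‖ ^ 2 * ‖(inner 𝓐 f f : 𝓐)‖ := by rw [norm_star]; ring
  -- the two comparison constants
  set C1 : ℝ := ‖d‖ ^ 2 * ‖((u⁻¹ : 𝓐ˣ) : 𝓐)‖ ^ 2 with hC1def
  set C2 : ℝ := ‖b‖ ^ 2 * δ ^ 2 * ‖((v⁻¹ : 𝓐ˣ) : 𝓐)‖ ^ 2 with hC2def
  have hC1nn : 0 ≤ C1 := by positivity
  have hC2nn : 0 ≤ C2 := by positivity
  have hcomp1 : ∀ f : H, ‖∑' i, (inner 𝓐 (Γ i f) (Γ i f) : 𝓐)‖ ≤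
      C1 * ‖∑' i, (inner 𝓐 (Λ i f) (Λ i f) : 𝓐)‖ := by
    intro f
    have h1 := hΓup f
    have h2 := hΛlow f
    have h3 : (0:ℝ) ≤ ‖d‖ ^ 2 := sq_nonneg _
    rw [hC1def]; nlinarith
  have hcomp2 : ∀ f : H, ‖∑' i, (inner 𝓐 (Λ i f) (Λ i f) : 𝓐)‖ ≤
      C2 * ‖∑' i, (inner 𝓐 (Γ i f) (Γ i f) : 𝓐)‖ := by
    intro f
    have h1 := hΛup f
    have h2 : ‖(inner 𝓐 f f : 𝓐)‖ = ‖f‖ ^ 2 := (RightCStarModule.norm_sq_eq (A := 𝓐)).symm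
    have h3 := hLbelow f
    have h4 : ‖Ladj f‖ ^ 2 = ‖(inner 𝓐 (Ladj f) (Ladj f) : 𝓐)‖ := RightCStarModule.norm_sq_eq (A := 𝓐)
    have h5 := hΓlow f
    have h6 : ‖f‖ ^ 2 ≤ δ ^ 2 * ‖Ladj f‖ ^ 2 := by nlinarith [norm_nonneg f, norm_nonneg (Ladj f)]
    have h7 : (0:ℝ) ≤ ‖b‖ ^ 2 := sq_nonneg _
    rw [hC2def]
    calc ‖∑' i, (inner 𝓐 (Λ i f) (Λ i f) : 𝓐)‖ ≤ ‖b‖ ^ 2 * ‖(inner 𝓐 f f : 𝓐)‖ := h1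
      _ = ‖b‖ ^ 2 * ‖f‖ ^ 2 := by rw [h2]
      _ ≤ ‖b‖ ^ 2 * (δ ^ 2 * ‖Ladj f‖ ^ 2) := mul_le_mul_of_nonneg_left h6 h7
      _ = ‖b‖ ^ 2 * δ ^ 2 * ‖(inner 𝓐 (Ladj f) (Ladj f) : 𝓐)‖ := by rw [← h4]; ring
      _ ≤ ‖b‖ ^ 2 * δ ^ 2 * (‖((v⁻¹ : 𝓐ˣ) : 𝓐)‖ ^ 2 * ‖∑' i, (inner 𝓐 (Γ i f) (Γ i f) : 𝓐)‖) :=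
          mul_le_mul_of_nonneg_left h5 (by positivity)
      _ = ‖b‖ ^ 2 * δ ^ 2 * ‖((v⁻¹ : 𝓐ˣ) : 𝓐)‖ ^ 2 * ‖∑' i, (inner 𝓐 (Γ i f) (Γ i f) : 𝓐)‖ := by ring
  -- finite-sum comparison
  have hfin : ∀ (t : Finset I) (f : H),
      ‖∑ i ∈ t, (inner 𝓐 (Λ i f - Γ i f) (Λ i f - Γ i f) : 𝓐)‖ ≤
        2 * ‖∑ i ∈ t, (inner 𝓐 (Λ i f) (Λ i f) : 𝓐)‖ +
        2 * ‖∑ i ∈ t, (inner 𝓐 (Γ i f) (Γ i f) : 𝓐)‖ := by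
    intro t f
    set SΛ := ∑ i ∈ t, (inner 𝓐 (Λ i f) (Λ i f) : 𝓐)
    set SΓ := ∑ i ∈ t, (inner 𝓐 (Γ i f) (Γ i f) : 𝓐)
    have hle : ∑ i ∈ t, (inner 𝓐 (Λ i f - Γ i f) (Λ i f - Γ i f) : 𝓐) ≤ (SΛ + SΛ) + (SΓ + SΓ) := by
      calc ∑ i ∈ t, (inner 𝓐 (Λ i f - Γ i f) (Λ i f - Γ i f) : 𝓐)
          ≤ ∑ i ∈ t, (((inner 𝓐 (Λ i f) (Λ i f) : 𝓐) + inner 𝓐 (Λ i f) (Λ i f)) +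
              ((inner 𝓐 (Γ i f) (Γ i f) : 𝓐) + inner 𝓐 (Γ i f) (Γ i f))) :=
            Finset.sum_le_sum fun i _ => cstar_par_ineq (Λ i f) (Γ i f)
        _ = (SΛ + SΛ) + (SΓ + SΓ) := by simp [SΛ, SΓ, Finset.sum_add_distrib]
    have h0 : (0:𝓐) ≤ ∑ i ∈ t, (inner 𝓐 (Λ i f - Γ i f) (Λ i f - Γ i f) : 𝓐) :=
      Finset.sum_nonneg fun i _ => RightCStarModule.inner_self_nonneg
    have hn := CStarAlgebra.norm_le_norm_of_nonneg_of_le h0 hle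
    have h1 := norm_add_le (SΛ + SΛ) (SΓ + SΓ)
    have h2 := norm_add_le SΛ SΛ
    have h3 := norm_add_le SΓ SΓ
    linarith
  -- summability of the difference series
  have hds : ∀ f : H, Summable fun i => (inner 𝓐 (Λ i f - Γ i f) (Λ i f - Γ i f) : 𝓐) := by
    intro f
    rw [summable_iff_vanishing_norm]
    intro ε hε
    obtain ⟨s1, hs1⟩ := summable_iff_vanishing_norm.mp (hsum f) (ε / 6) (by positivity)
    obtain ⟨s2, hs2⟩ := summable_iff_vanishing_norm.mp (hsumΓ f) (ε / 6) (by positivity)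
    refine ⟨s1 ∪ s2, fun t ht => ?_⟩
    have hd1 := hs1 t (Finset.disjoint_union_right.mp ht).1
    have hd2 := hs2 t (Finset.disjoint_union_right.mp ht).2
    have := hfin t f
    linarith
  -- tsum comparison
  have htsum : ∀ f : H, ‖∑' i, (inner 𝓐 (Λ i f - Γ i f) (Λ i f - Γ i f) : 𝓐)‖ ≤
      2 * ‖∑' i, (inner 𝓐 (Λ i f) (Λ i f) : 𝓐)‖ + 2 * ‖∑' i, (inner 𝓐 (Γ i f) (Γ i f) : 𝓐)‖ := by
    intro f
    set TΛ := ∑' i, (inner 𝓐 (Λ i f) (Λ i f) : 𝓐)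
    set TΓ := ∑' i, (inner 𝓐 (Γ i f) (Γ i f) : 𝓐)
    have hsumR : Summable fun i => (((inner 𝓐 (Λ i f) (Λ i f) : 𝓐) + inner 𝓐 (Λ i f) (Λ i f)) +
        ((inner 𝓐 (Γ i f) (Γ i f) : 𝓐) + inner 𝓐 (Γ i f) (Γ i f))) :=
      ((hsum f).add (hsum f)).add ((hsumΓ f).add (hsumΓ f))
    have hts : ∑' i, (inner 𝓐 (Λ i f - Γ i f) (Λ i f - Γ i f) : 𝓐) ≤
        ∑' i, (((inner 𝓐 (Λ i f) (Λ i f) : 𝓐) + inner 𝓐 (Λ i f) (Λ i f)) +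
          ((inner 𝓐 (Γ i f) (Γ i f) : 𝓐) + inner 𝓐 (Γ i f) (Γ i f))) :=
      Summable.tsum_le_tsum (fun i => cstar_par_ineq (Λ i f) (Γ i f)) (hds f) hsumR
    have heq : ∑' i, (((inner 𝓐 (Λ i f) (Λ i f) : 𝓐) + inner 𝓐 (Λ i f) (Λ i f)) +
        ((inner 𝓐 (Γ i f) (Γ i f) : 𝓐) + inner 𝓐 (Γ i f) (Γ i f))) = (TΛ + TΛ) + (TΓ + TΓ) := by
      rw [Summable.tsum_add ((hsum f).add (hsum f)) ((hsumΓ f).add (hsumΓ f)),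
        Summable.tsum_add (hsum f) (hsum f), Summable.tsum_add (hsumΓ f) (hsumΓ f)]
    rw [heq] at hts
    have h0 : (0:𝓐) ≤ ∑' i, (inner 𝓐 (Λ i f - Γ i f) (Λ i f - Γ i f) : 𝓐) :=
      tsum_nonneg fun i => RightCStarModule.inner_self_nonneg
    have hn := CStarAlgebra.norm_le_norm_of_nonneg_of_le h0 hts
    have h1 := norm_add_le (TΛ + TΛ) (TΓ + TΓ)
    have h2 := norm_add_le TΛ TΛ
    have h3 := norm_add_le TΓ TΓ
    linarith
  -- conclusion
  refine ⟨max (2 + 2 * C1) (2 + 2 * C2), lt_max_of_lt_left (by linarith), fun f => ?_⟩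
  refine ⟨hds f, ?_⟩
  have hM1 : 2 + 2 * C1 ≤ max (2 + 2 * C1) (2 + 2 * C2) := le_max_left _ _
  have hM2 : 2 + 2 * C2 ≤ max (2 + 2 * C1) (2 + 2 * C2) := le_max_right _ _
  have hnΛ : (0:ℝ) ≤ ‖∑' i, (inner 𝓐 (Λ i f) (Λ i f) : 𝓐)‖ := norm_nonneg _
  have hnΓ : (0:ℝ) ≤ ‖∑' i, (inner 𝓐 (Γ i f) (Γ i f) : 𝓐)‖ := norm_nonneg _
  have hb1 : ‖∑' i, (inner 𝓐 (Λ i f - Γ i f) (Λ i f - Γ i f) : 𝓐)‖ ≤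
      max (2 + 2 * C1) (2 + 2 * C2) * ‖∑' i, (inner 𝓐 (Λ i f) (Λ i f) : 𝓐)‖ := by
    have := htsum f
    have := hcomp1 f
    nlinarith
  have hb2 : ‖∑' i, (inner 𝓐 (Λ i f - Γ i f) (Λ i f - Γ i f) : 𝓐)‖ ≤
      max (2 + 2 * C1) (2 + 2 * C2) * ‖∑' i, (inner 𝓐 (Γ i f) (Γ i f) : 𝓐)‖ := by
    have := htsum f
    have := hcomp2 f
    nlinarith
  rw [mul_min_of_nonneg _ _ (by positivity : (0:ℝ) ≤ max (2 + 2 * C1) (2 + 2 * C2))]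
  exact le_min hb1 hb2
end
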